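/- arXiv:1305.7512 — 11 statements merged into one kernel-verified Lean document; each statement's English description precedes it below -/
import Mathlib

section
/- Let r and c be real numbers with 0 < r < c. Suppose g, h : ℂ → ℂ are continuous on the closed unit disc, complex-differentiable on the open unit disc, and satisfy g(w)·h(w) = r·w + c for all w in the closed unit disc and |g(w)| = |h(w)| for all w with |w| = 1. Then there is a real constant θ such that g(w) = e^{iθ}·h(w) for all w in the closed unit disc, and consequently g(w)² = e^{iθ}·(r·w + c) for all w in the closed unit disc. -/
/-- Analytic core of Proposition `bdisc`: if `g·h = r·w + c` on the closed unit disc,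
`g, h` are holomorphic on the open disc and continuous up to the boundary, and
`|g| = |h|` on the boundary circle, then `g = e^{iθ}·h` for a real constant `θ`,
and hence `g² = e^{iθ}·(r·w + c)`. -/
theorem stmt_0 (r c : ℝ) (hr : 0 < r) (hrc : r < c)
    (g h : ℂ → ℂ)
    (hgc : ContinuousOn g (Metric.closedBall 0 1))
    (hhc : ContinuousOn h (Metric.closedBall 0 1))
    (hgd : DifferentiableOn ℂ g (Metric.ball 0 1))
    (hhd : DifferentiableOn ℂ h (Metric.ball 0 1))
    (hprod : ∀ w ∈ Metric.closedBall (0 : ℂ) 1, g w * h w = r * w + c)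
    (hbd : ∀ w : ℂ, ‖w‖ = 1 → ‖g w‖ = ‖h w‖) :
    ∃ θ : ℝ, ∀ w ∈ Metric.closedBall (0 : ℂ) 1,
      g w = Complex.exp (θ * Complex.I) * h w ∧
      (g w) ^ 2 = Complex.exp (θ * Complex.I) * (r * w + c) := by
  -- r w + c never vanishes on the closed disc
  have hne : ∀ w ∈ Metric.closedBall (0 : ℂ) 1, (r : ℂ) * w + c ≠ 0 := by
    intro w hw h0
    have hw1 : ‖w‖ ≤ 1 := by
      simpa [Complex.dist_eq] using Metric.mem_closedBall.mp hw
    have h1 : ‖(r : ℂ) * w‖ ≤ r := by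
      rw [norm_mul, Complex.norm_real, Real.norm_eq_abs, abs_of_pos hr]
      nlinarith [norm_nonneg w]
    have h2 : (r : ℂ) * w = -(c : ℂ) := by linear_combination h0
    rw [h2] at h1
    simp only [norm_neg, Complex.norm_real, Real.norm_eq_abs] at h1
    rw [abs_of_pos (lt_trans hr hrc)] at h1
    linarith
  have hgne : ∀ w ∈ Metric.closedBall (0 : ℂ) 1, g w ≠ 0 := fun w hw h0 =>
    hne w hw (by rw [← hprod w hw, h0, zero_mul])
  have hhne : ∀ w ∈ Metric.closedBall (0 : ℂ) 1, h w ≠ 0 := fun w hw h0 =>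
    hne w hw (by rw [← hprod w hw, h0, mul_zero])
  have hsub : Metric.ball (0 : ℂ) 1 ⊆ Metric.closedBall 0 1 := Metric.ball_subset_closedBall
  have hcl : closure (Metric.ball (0 : ℂ) 1) = Metric.closedBall 0 1 :=
    closure_ball 0 one_ne_zero
  have hfr : frontier (Metric.ball (0 : ℂ) 1) = Metric.sphere 0 1 :=
    frontier_ball 0 one_ne_zero
  -- F = g/h, G = h/g
  set F : ℂ → ℂ := fun w => g w / h w with hF
  set G : ℂ → ℂ := fun w => h w / g w with hG
  have hFd : DiffContOnCl ℂ F (Metric.ball 0 1) := by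
    refine ⟨hgd.div hhd (fun w hw => hhne w (hsub hw)), ?_⟩
    rw [hcl]; exact hgc.div hhc (fun w hw => hhne w hw)
  have hGd : DiffContOnCl ℂ G (Metric.ball 0 1) := by
    refine ⟨hhd.div hgd (fun w hw => hgne w (hsub hw)), ?_⟩
    rw [hcl]; exact hhc.div hgc (fun w hw => hgne w hw)
  -- boundary norms
  have hbF : ∀ z ∈ frontier (Metric.ball (0 : ℂ) 1), ‖F z‖ ≤ 1 := by
    intro z hz
    rw [hfr] at hz
    have hz1 : ‖z‖ = 1 := by simpa [Complex.dist_eq] using hz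
    have hzc : z ∈ Metric.closedBall (0 : ℂ) 1 := by
      simp [Complex.dist_eq, hz1.le]
    have := hbd z hz1
    have hh0 : ‖h z‖ ≠ 0 := by
      simpa using hhne z hzc
    simp only [hF, norm_div, this]
    rw [div_self hh0]
  have hbG : ∀ z ∈ frontier (Metric.ball (0 : ℂ) 1), ‖G z‖ ≤ 1 := by
    intro z hz
    rw [hfr] at hz
    have hz1 : ‖z‖ = 1 := by simpa [Complex.dist_eq] using hz
    have hzc : z ∈ Metric.closedBall (0 : ℂ) 1 := by
      simp [Complex.dist_eq, hz1.le]
    have := hbd z hz1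
    have hg0 : ‖g z‖ ≠ 0 := by
      simpa using hgne z hzc
    simp only [hG, norm_div, this]
    rw [div_self (by rw [← this]; exact hg0)]
  have hFle : ∀ w ∈ Metric.closedBall (0 : ℂ) 1, ‖F w‖ ≤ 1 := by
    intro w hw
    exact Complex.norm_le_of_forall_mem_frontier_norm_le Metric.isBounded_ball hFd hbF
      (hcl ▸ hw)
  have hGle : ∀ w ∈ Metric.closedBall (0 : ℂ) 1, ‖G w‖ ≤ 1 := by
    intro w hw
    exact Complex.norm_le_of_forall_mem_frontier_norm_le Metric.isBounded_ball hGd hbG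
      (hcl ▸ hw)
  -- |F| = 1 everywhere
  have hFone : ∀ w ∈ Metric.closedBall (0 : ℂ) 1, ‖F w‖ = 1 := by
    intro w hw
    have hFG : ‖F w‖ * ‖G w‖ = 1 := by
      rw [← norm_mul]
      have : F w * G w = 1 := by
        simp only [hF, hG]
        rw [div_mul_div_comm, mul_comm (h w) (g w)]
        exact div_self (mul_ne_zero (hgne w hw) (hhne w hw))
      rw [this, norm_one]
    have h1 := hFle w hw
    have h2 := hGle w hw
    nlinarith [norm_nonneg (F w), norm_nonneg (G w)]
  -- max modulus: F constant
  have h0mem : (0 : ℂ) ∈ Metric.ball (0 : ℂ) 1 := by simp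
  have hmax : IsMaxOn (norm ∘ F) (Metric.ball 0 1) 0 := by
    intro w hw
    simp only [Function.comp_apply, Set.mem_setOf_eq]
    rw [hFone w (hsub hw), hFone 0 (hsub h0mem)]
  have hconst : Set.EqOn F (Function.const ℂ (F 0)) (Metric.closedBall 0 1) := by
    rw [← hcl]
    exact Complex.eqOn_closure_of_isPreconnected_of_isMaxOn_norm
      (convex_ball (0:ℂ) 1).isPreconnected Metric.isOpen_ball hFd h0mem hmax
  -- the constant has modulus 1
  have habs : ‖F 0‖ = 1 := hFone 0 (hsub h0mem)
  refine ⟨(F 0).arg, fun w hw => ?_⟩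
  have hexp : Complex.exp (((F 0).arg : ℂ) * Complex.I) = F 0 := by
    have := Complex.norm_mul_exp_arg_mul_I (F 0)
    rwa [habs, Complex.ofReal_one, one_mul] at this
  have hFw : F w = F 0 := hconst hw
  have hgw : g w = F 0 * h w := by
    rw [← hFw, hF]
    exact (div_mul_cancel₀ _ (hhne w hw)).symm
  constructor
  · rw [hexp]; exact hgw
  · rw [hexp, ← hprod w hw, pow_two, hgw]; ring
end

section
/- Let 0 < r < c be real numbers, a ∈ ℂ with 0 < |a| < 1, η₀, η₁, η₂ ∈ ℂ with |ηⱼ| ≤ 1 for each j, and ζ ∈ ℂ with |ζ| ≥ 1, such that the polynomial identity r(w − a) + c·w³·(1 − conj(a)·w) = −c·conj(a)·(w − ζ)(w − η₀)(w − η₁)(w − η₂) holds for all w ∈ ℂ. Then η₀η₁η₂ ≠ 0 and |a·r/(η₀η₁η₂)| ≥ c/4. -/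
/-- Lemma `h0a`, first assertion: from the factorization of
`Ξ(w) = r(w − a) + c·w³·(1 − conj(a)·w)` with roots `ηⱼ` in the closed unit disc and
`ζ` outside the open unit disc, the quantity `h(0)² = a·r/(η₀η₁η₂)` satisfies
`|h(0)²| ≥ c/4`. -/
theorem stmt_1 (r c : ℝ) (hr : 0 < r) (hrc : r < c)
    (a η₀ η₁ η₂ ζ : ℂ)
    (ha0 : 0 < ‖a‖) (ha1 : ‖a‖ < 1)
    (hη₀ : ‖η₀‖ ≤ 1) (hη₁ : ‖η₁‖ ≤ 1) (hη₂ : ‖η₂‖ ≤ 1)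
    (hζ : 1 ≤ ‖ζ‖)
    (hfact : ∀ w : ℂ,
      r * (w - a) + c * w ^ 3 * (1 - (starRingEnd ℂ) a * w) =
        -c * (starRingEnd ℂ) a * (w - ζ) * (w - η₀) * (w - η₁) * (w - η₂)) :
    η₀ * η₁ * η₂ ≠ 0 ∧ c / 4 ≤ ‖a * r / (η₀ * η₁ * η₂)‖ := by
  have hc : 0 < c := hr.trans hrc
  have e1 : (r : ℂ) * a = c * (starRingEnd ℂ) a * ζ * (η₀ * η₁ * η₂) := by
    linear_combination -hfact 0
  have e2 : (c : ℂ) = c * (starRingEnd ℂ) a * (ζ + η₀ + η₁ + η₂) := by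
    linear_combination (hfact 2 - hfact (-2) - 2 * hfact 1 + 2 * hfact (-1)) / 12
  have hane : a ≠ 0 := by
    intro h; simp [h] at ha0
  have hp : η₀ * η₁ * η₂ ≠ 0 := by
    intro h
    rw [h, mul_zero] at e1
    exact mul_ne_zero (by exact_mod_cast hr.ne') hane e1
  refine ⟨hp, ?_⟩
  have hP : 0 < ‖η₀ * η₁ * η₂‖ := norm_pos_iff.mpr hp
  have A1 : r * ‖a‖ =
      c * ‖a‖ * ‖ζ‖ * ‖η₀ * η₁ * η₂‖ := by
    have h := congrArg (‖·‖) e1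
    rw [norm_mul ((r : ℂ)) a,
      norm_mul ((c : ℂ) * (starRingEnd ℂ) a * ζ) (η₀ * η₁ * η₂),
      norm_mul ((c : ℂ) * (starRingEnd ℂ) a) ζ,
      norm_mul ((c : ℂ)) ((starRingEnd ℂ) a)] at h
    rw [Complex.norm_conj, Complex.norm_real, Complex.norm_real, Real.norm_eq_abs, Real.norm_eq_abs,
      abs_of_pos hr, abs_of_pos hc] at h
    linarith [h]
  have A2 : 1 ≤ ‖a‖ * (‖ζ‖ + 3) := by
    have h := congrArg (‖·‖) e2
    rw [norm_mul, norm_mul, Complex.norm_conj, Complex.norm_real, Real.norm_eq_abs, abs_of_pos hc] at h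
    have key : (1 : ℝ) = ‖a‖ * ‖ζ + η₀ + η₁ + η₂‖ :=
      mul_left_cancel₀ hc.ne' (by linear_combination h)
    have htri : ‖ζ + η₀ + η₁ + η₂‖ ≤ ‖ζ‖ + 3 := by
      calc ‖ζ + η₀ + η₁ + η₂‖
          ≤ ‖ζ‖ + ‖η₀‖ + ‖η₁‖ + ‖η₂‖ := by
            refine le_trans (norm_add_le _ _) ?_
            refine add_le_add ?_ le_rfl
            refine le_trans (norm_add_le _ _) ?_
            exact add_le_add (norm_add_le _ _) le_rfl
        _ ≤ ‖ζ‖ + 3 := by linarith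
    have := mul_le_mul_of_nonneg_left htri (norm_nonneg a)
    linarith
  have hr' : r = c * ‖ζ‖ * ‖η₀ * η₁ * η₂‖ :=
    mul_right_cancel₀ ha0.ne' (by linarith [A1])
  rw [norm_div, norm_mul, Complex.norm_real, Real.norm_eq_abs, abs_of_pos hr, le_div_iff₀ hP]
  have haz : ‖a‖ ≤ ‖a‖ * ‖ζ‖ :=
    le_mul_of_one_le_right (norm_nonneg a) hζ
  have h14 : (1:ℝ) ≤ 4 * (‖a‖ * ‖ζ‖) := by nlinarith
  rw [hr']
  nlinarith [mul_pos hc hP]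
end

section
/- Let 0 < r < c be real numbers, b, ν ∈ ℂ with 0 < |b| < 1 and |ν| < 1, η₀, …, η₅ ∈ ℂ with |ηⱼ| ≤ 1 for each j, and ζ ∈ ℂ with |ζ| ≥ 1, such that the polynomial identity r(w − b)(1 − conj(ν)·w)³ + c·w³·(1 − conj(b)·w)(w − ν)³ = −c·conj(b)·(w − ζ)·(w − η₀)(w − η₁)(w − η₂)(w − η₃)(w − η₄)(w − η₅) holds for all w ∈ ℂ. Then η₀η₁η₂η₃η₄η₅ ≠ 0 and |b·r/(η₀η₁η₂η₃η₄η₅)| ≥ c/10. -/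
/-- Lemma `asymp`, first assertion: from the factorization of the degree 7 polynomial
`Ξ(w) = r(w − b)(1 − conj(ν)w)³ + c·w³·(1 − conj(b)w)(w − ν)³` with roots `ηⱼ` in the
closed unit disc and `ζ` outside the open unit disc, the quantity
`h(0)² = −b·r/(η₀⋯η₅)` satisfies `|h(0)²| ≥ c/10`. -/
theorem stmt_2 (r c : ℝ) (hr : 0 < r) (hrc : r < c)
    (b ν η₀ η₁ η₂ η₃ η₄ η₅ ζ : ℂ)
    (hb0 : 0 < ‖b‖) (hb1 : ‖b‖ < 1) (hν : ‖ν‖ < 1)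
    (hη₀ : ‖η₀‖ ≤ 1) (hη₁ : ‖η₁‖ ≤ 1) (hη₂ : ‖η₂‖ ≤ 1)
    (hη₃ : ‖η₃‖ ≤ 1) (hη₄ : ‖η₄‖ ≤ 1) (hη₅ : ‖η₅‖ ≤ 1)
    (hζ : 1 ≤ ‖ζ‖)
    (hfact : ∀ w : ℂ,
      r * (w - b) * (1 - (starRingEnd ℂ) ν * w) ^ 3 +
        c * w ^ 3 * (1 - (starRingEnd ℂ) b * w) * (w - ν) ^ 3 =
      -c * (starRingEnd ℂ) b * (w - ζ) *
        (w - η₀) * (w - η₁) * (w - η₂) * (w - η₃) * (w - η₄) * (w - η₅)) :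
    η₀ * η₁ * η₂ * η₃ * η₄ * η₅ ≠ 0 ∧
      c / 10 ≤ ‖b * r / (η₀ * η₁ * η₂ * η₃ * η₄ * η₅)‖ := by
  have hc : (0:ℝ) < c := hr.trans hrc
  have hcC : (c:ℂ) ≠ 0 := by exact_mod_cast hc.ne'
  set p := η₀ * η₁ * η₂ * η₃ * η₄ * η₅ with hp
  set bb := (starRingEnd ℂ) b with hbb
  -- coefficient 0 identity
  have E0 : -(r:ℂ) * b = c * bb * ζ * p := by
    have h := hfact 0
    rw [hp, hbb]
    linear_combination h
  -- coefficient 6 identity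
  have E6 : (c:ℂ) * (1 + 3 * bb * ν) = c * bb * (ζ + (η₀ + η₁ + η₂ + η₃ + η₄ + η₅)) := by
    rw [hbb]
    linear_combination (1/180 : ℂ) * hfact 0 + (-3/80 : ℂ) * hfact 1 +
      (13/120 : ℂ) * hfact 2 + (-25/144 : ℂ) * hfact 3 + (1/6 : ℂ) * hfact 4 +
      (-23/240 : ℂ) * hfact 5 + (11/360 : ℂ) * hfact 6 + (-1/240 : ℂ) * hfact 7
  have E6' : 1 + 3 * bb * ν = bb * (ζ + (η₀ + η₁ + η₂ + η₃ + η₄ + η₅)) :=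
    mul_left_cancel₀ hcC (by linear_combination E6)
  have habb : ‖bb‖ = ‖b‖ := by simp [hbb]
  -- abs of E0
  have hE0abs : c * (‖b‖ * ‖ζ‖ * ‖p‖) = r * ‖b‖ := by
    have := congrArg (‖·‖) E0
    simpa [norm_mul, habb, Complex.norm_real, Real.norm_eq_abs, abs_of_pos hr, abs_of_pos hc, mul_assoc,
      mul_comm, mul_left_comm] using this.symm
  have h3 : c * (‖ζ‖ * ‖p‖) = r :=
    mul_right_cancel₀ hb0.ne' (by linear_combination hE0abs)
  have hpabs : 0 < ‖p‖ := by
    rcases (norm_nonneg p).lt_or_eq with h | h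
    · exact h
    · exfalso; rw [← h] at h3; simp at h3; linarith
  have hpne : p ≠ 0 := by
    intro h; rw [h] at hpabs; simp at hpabs
  refine ⟨hpne, ?_⟩
  -- |b r / p| = c |b| |ζ|
  have hval : ‖b * r / p‖ = c * (‖b‖ * ‖ζ‖) := by
    rw [norm_div, norm_mul, Complex.norm_real, Real.norm_eq_abs, abs_of_pos hr]
    rw [div_eq_iff hpabs.ne']
    nlinarith [hE0abs]
  rw [hval]
  -- lower bound |b||ζ| ≥ 1/10
  have key : (1:ℝ)/10 ≤ ‖b‖ * ‖ζ‖ := by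
    rcases le_or_gt (1/10 : ℝ) (‖b‖) with h | h
    · calc (1:ℝ)/10 ≤ ‖b‖ := h
        _ = ‖b‖ * 1 := (mul_one _).symm
        _ ≤ ‖b‖ * ‖ζ‖ := mul_le_mul_of_nonneg_left hζ hb0.le
    · have h1 : ‖bb * ζ‖ = ‖b‖ * ‖ζ‖ := by
        simp [habb]
      have heq : bb * ζ = 1 + 3 * bb * ν - bb * (η₀ + η₁ + η₂ + η₃ + η₄ + η₅) := by
        linear_combination -E6'
      have hsum : ‖η₀ + η₁ + η₂ + η₃ + η₄ + η₅‖ ≤ 6 := by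
        have a1 := norm_add_le (η₀+η₁+η₂+η₃+η₄) η₅
        have a2 := norm_add_le (η₀+η₁+η₂+η₃) η₄
        have a3 := norm_add_le (η₀+η₁+η₂) η₃
        have a4 := norm_add_le (η₀+η₁) η₂
        have a5 := norm_add_le η₀ η₁
        linarith
      have t1 : ‖bb * (η₀ + η₁ + η₂ + η₃ + η₄ + η₅)‖ ≤ ‖b‖ * 6 := by
        rw [norm_mul, habb]
        exact mul_le_mul_of_nonneg_left hsum hb0.le
      have t2 : (1:ℝ) - 3 * ‖b‖ * ‖ν‖
          ≤ ‖1 + 3 * bb * ν‖ := by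
        have habs3 : ‖3 * bb * ν‖ = 3 * ‖b‖ * ‖ν‖ := by
          simp [norm_mul, habb]
        have h4 : ‖(1:ℂ)‖ ≤ ‖1 + 3*bb*ν‖ + ‖3*bb*ν‖ := by
          have := norm_add_le (1 + 3*bb*ν) (-(3*bb*ν))
          simpa using this
        simp only [norm_one] at h4
        linarith [habs3 ▸ h4]
      have t3 : ‖1 + 3 * bb * ν‖
          ≤ ‖bb * ζ‖ + ‖bb * (η₀ + η₁ + η₂ + η₃ + η₄ + η₅)‖ := by
        have := norm_add_le (bb * ζ) (bb * (η₀ + η₁ + η₂ + η₃ + η₄ + η₅))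
        have he : bb * ζ + bb * (η₀ + η₁ + η₂ + η₃ + η₄ + η₅) = 1 + 3 * bb * ν := by
          linear_combination -E6'
        rwa [he] at this
      rw [h1] at t3
      nlinarith [hν, hb0, norm_nonneg ν]
  nlinarith [mul_le_mul_of_nonneg_left key hc.le]
end

section
/- Let 0 < r < c be real numbers. For every ε > 0 there exists t₀ ∈ (0,1) such that for all t ∈ (0, t₀), all θ ∈ ℝ, and all a, η₀, η₁, η₂, ζ ∈ ℂ with 0 < |a| < 1, |ηⱼ| < 1 for each j, and |ζ| > 1, satisfying both the polynomial identity r(w − a) + c·w³·(1 − conj(a)·w) = −c·conj(a)·(w − ζ)(w − η₀)(w − η₁)(w − η₂) for all w ∈ ℂ and the constraint a·r·((1−t)/t)²·(η₀η₁η₂)³ = e^{6iθ}, one has, after a suitable permutation of the indices 0,1,2: |a| < ε, |η₀| < ε, |η₁ − i·√(r/c)| < ε, and |η₂ + i·√(r/c)| < ε. -/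
set_option maxHeartbeats 1000000


lemma abs_sub_le'' (x y : ℂ) : ‖x - y‖ ≤ ‖x‖ + ‖y‖ :=
  norm_sub_le x y

lemma key_lemma (r c μ ε : ℝ) (hr : 0 < r) (hrc : r < c) (hμ0 : 0 < μ) (hε : 0 < ε)
    (hμ1 : μ ≤ 1/24) (hμ3 : μ ≤ ε^2/6) (hμ4 : μ ≤ (r/c)/20)
    (u v w0 : ℂ) (hu1 : ‖u‖ ≤ 1) (hv1 : ‖v‖ ≤ 1)
    (hw0 : ‖w0‖ ≤ 2*μ)
    (hs : ‖w0 + u + v‖ ≤ 6*μ^3)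
    (hq : ‖w0*u + w0*v + u*v - (r:ℂ)/(c:ℂ)‖ ≤ μ) :
    (‖u - Complex.I * Real.sqrt (r/c)‖ < ε ∧
     ‖v + Complex.I * Real.sqrt (r/c)‖ < ε) ∨
    (‖v - Complex.I * Real.sqrt (r/c)‖ < ε ∧
     ‖u + Complex.I * Real.sqrt (r/c)‖ < ε) := by
  have hc : 0 < c := hr.trans hrc
  have hrc0 : 0 < r/c := div_pos hr hc
  have hrc1 : r/c < 1 := (div_lt_one hc).mpr hrc
  obtain ⟨m, hmdef⟩ : ∃ m : ℝ, m = Real.sqrt (r/c) := ⟨_, rfl⟩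
  rw [← hmdef]
  have hm2 : m^2 = r/c := by rw [hmdef]; exact Real.sq_sqrt hrc0.le
  have hm0 : 0 < m := by rw [hmdef]; exact Real.sqrt_pos.mpr hrc0
  have hm1 : m < 1 := by nlinarith
  -- scalar facts
  have hμsq : μ*μ ≤ (1/24)*(1/24) := mul_le_mul hμ1 hμ1 hμ0.le (by norm_num)
  have hcube : 6*μ^3 ≤ μ := by nlinarith
  have h6sq : 6*μ^2 ≤ μ := by nlinarith
  have h5ε2 : 5*μ < ε^2 := by nlinarith
  have hle5 : 5*μ ≤ (m/2)^2 := by nlinarith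
  have hmm : m^2 ≤ m := by nlinarith
  have hμm : μ ≤ m/20 := by nlinarith
  -- triangle bounds
  have huv : ‖u + v‖ ≤ 3*μ := by
    have h1 := abs_sub_le'' (w0 + u + v) w0
    rw [show w0 + u + v - w0 = u + v from by ring] at h1
    linarith
  have hp : ‖u*v - (r:ℂ)/(c:ℂ)‖ ≤ 2*μ := by
    have h1 := abs_sub_le'' (w0*u + w0*v + u*v - (r:ℂ)/(c:ℂ)) (w0*(u+v))
    rw [show w0*u + w0*v + u*v - (r:ℂ)/(c:ℂ) - w0*(u+v) = u*v - (r:ℂ)/(c:ℂ) from by ring,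
      norm_mul] at h1
    have h2 : ‖w0‖ * ‖u + v‖ ≤ (2*μ)*(3*μ) :=
      mul_le_mul hw0 huv (norm_nonneg _) (by positivity)
    linarith [h1, h2, hq, h6sq]
  have hrccast : ((r:ℂ)/(c:ℂ)) = ((m:ℂ))^2 := by
    have h1 : ((r/c : ℝ) : ℂ) = ((m:ℂ))^2 := by exact_mod_cast congrArg (fun x : ℝ => (x:ℂ)) hm2.symm
    rw [← h1]; push_cast; ring
  have hfac : ∀ x y : ℂ, ‖x‖ ≤ 1 → ‖x + y‖ ≤ 3*μ →
      ‖x*y - (r:ℂ)/(c:ℂ)‖ ≤ 2*μ →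
      ‖x - Complex.I*(m:ℂ)‖ * ‖x + Complex.I*(m:ℂ)‖ ≤ 5*μ := by
    intro x y hx1 hxy hxyp
    have hfac1 : (x - Complex.I*(m:ℂ)) * (x + Complex.I*(m:ℂ))
        = x*(x+y) - (x*y - (r:ℂ)/(c:ℂ)) := by
      linear_combination (-((m:ℂ))^2) * Complex.I_sq - hrccast
    rw [← norm_mul, hfac1]
    have h1 := abs_sub_le'' (x*(x+y)) (x*y - (r:ℂ)/(c:ℂ))
    rw [norm_mul] at h1
    have h2 : ‖x‖ * ‖x+y‖ ≤ 1*(3*μ) :=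
      mul_le_mul hx1 hxy (norm_nonneg _) (by norm_num)
    linarith
  have hufac := hfac u v hu1 huv hp
  have hvfac := hfac v u hv1 (by rwa [add_comm]) (by rwa [mul_comm])
  obtain ⟨s5, hs5def⟩ : ∃ s5 : ℝ, s5 = Real.sqrt (5*μ) := ⟨_, rfl⟩
  have hs5sq : s5^2 = 5*μ := by rw [hs5def]; exact Real.sq_sqrt (by positivity)
  have hs5pos : 0 < s5 := by rw [hs5def]; exact Real.sqrt_pos.mpr (by positivity)
  have hs5ε : s5 < ε := by rw [hs5def]; exact (Real.sqrt_lt' hε).mpr h5ε2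
  have hs5m : s5 ≤ m/2 := by
    have h1 : Real.sqrt (5*μ) ≤ Real.sqrt ((m/2)^2) := Real.sqrt_le_sqrt hle5
    rw [Real.sqrt_sq (by positivity)] at h1
    rw [hs5def]; exact h1
  have hdicho : ∀ x : ℂ, ‖x - Complex.I*(m:ℂ)‖ * ‖x + Complex.I*(m:ℂ)‖ ≤ 5*μ →
      ‖x - Complex.I*(m:ℂ)‖ ≤ s5 ∨ ‖x + Complex.I*(m:ℂ)‖ ≤ s5 := by
    intro x hx
    by_contra hcon
    push_neg at hcon
    have h1 := mul_lt_mul'' hcon.1 hcon.2 hs5pos.le hs5pos.le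
    have h2 : s5^2 < ‖x - Complex.I*(m:ℂ)‖ * ‖x + Complex.I*(m:ℂ)‖ := by
      rw [sq]; exact h1
    rw [hs5sq] at h2
    exact absurd (h2.trans_le hx) (lt_irrefl _)
  have h2m : ‖2*Complex.I*(m:ℂ)‖ = 2*m := by
    rw [norm_mul, norm_mul, Complex.norm_two, Complex.norm_I, Complex.norm_real, Real.norm_eq_abs,
      abs_of_nonneg hm0.le, mul_one]
  rcases hdicho u hufac with hu' | hu' <;> rcases hdicho v hvfac with hv' | hv'
  · exfalso
    have ha := abs_sub_le'' ((u + v) - (u - Complex.I*(m:ℂ))) (v - Complex.I*(m:ℂ))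
    have hb := abs_sub_le'' (u + v) (u - Complex.I*(m:ℂ))
    rw [show (u + v) - (u - Complex.I*(m:ℂ)) - (v - Complex.I*(m:ℂ)) = 2*Complex.I*(m:ℂ) from by ring,
      h2m] at ha
    linarith
  · exact Or.inl ⟨lt_of_le_of_lt hu' hs5ε, lt_of_le_of_lt hv' hs5ε⟩
  · exact Or.inr ⟨lt_of_le_of_lt hv' hs5ε, lt_of_le_of_lt hu' hs5ε⟩
  · exfalso
    have ha := abs_sub_le'' ((u + Complex.I*(m:ℂ)) + (v + Complex.I*(m:ℂ))) (u + v)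
    have hb := norm_add_le (u + Complex.I*(m:ℂ)) (v + Complex.I*(m:ℂ))
    rw [show (u + Complex.I*(m:ℂ)) + (v + Complex.I*(m:ℂ)) - (u + v) = 2*Complex.I*(m:ℂ) from by ring,
      h2m] at ha
    linarith


lemma abs_sub_le''' (x y : ℂ) : ‖x - y‖ ≤ ‖x‖ + ‖y‖ :=
  norm_sub_le x y


lemma arith1 (A X p r c : ℝ) (hA : 0 ≤ A) (hr : 0 < r) (hc : 0 < c) (hX : 0 < X)
    (habs : A * (r * (X^2 * p^3)) = 1) (step1 : r*A ≤ 4*(c*p)) :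
    r^4*(X^2*A^4) ≤ 64*c^3 := by
  have hp0 : 0 ≤ p := by nlinarith
  have step2 : (r*A)^3 ≤ (4*(c*p))^3 := pow_le_pow_left₀ (by positivity) step1 3
  have hint := mul_le_mul_of_nonneg_left step2 (show (0:ℝ) ≤ A*(r*X^2) by positivity)
  have h64 : 64*c^3*(A*(r*(X^2*p^3))) = 64*c^3 := by rw [habs, mul_one]
  nlinarith [hint, h64]

lemma arith2 (A Z p r c μ : ℝ) (hc : 0 < c) (hrc : r < c) (hA : 0 ≤ A) (hAμ : A ≤ μ^3)
    (hA24 : A ≤ 1/24) (hp0 : 0 ≤ p) (hZ : 1 - 3*A ≤ A*Z) (he4 : c*(A*(Z*p)) = r*A) :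
    p ≤ 2*μ^3 := by
  have h1 : (1-3*A)*p ≤ A*Z*p := mul_le_mul_of_nonneg_right hZ hp0
  have h2 : r*A ≤ c*A := mul_le_mul_of_nonneg_right hrc.le hA
  have h3 : A*Z*p ≤ A := by nlinarith
  have h4 := mul_le_mul_of_nonneg_right hA24 hp0
  linarith

lemma arith3 (A Z S Q μ : ℝ) (hA : 0 ≤ A) (hAμ : A ≤ μ^3) (hA24 : A ≤ 1/24)
    (hS0 : 0 ≤ S) (hQ3 : Q ≤ 3) (hZ : 1-3*A ≤ A*Z) (hZS : Z*S = Q) : S ≤ 6*μ^3 := by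
  have h1 : (1-3*A)*S ≤ A*Z*S := mul_le_mul_of_nonneg_right hZ hS0
  have h2 : A*Z*S = A*Q := by rw [mul_assoc, hZS]
  have h3 : A*Q ≤ 3*A := by nlinarith
  have h4 := mul_le_mul_of_nonneg_right hA24 hS0
  linarith

lemma arith4 (μ : ℝ) (h0 : 0 < μ) (h1 : μ ≤ 1/24) : μ^3*(6*μ^3*3 + 2*μ^3) ≤ μ := by
  have h5 : μ^5 ≤ (1/24)^5 := pow_le_pow_left₀ h0.le h1 5
  have h6 := mul_le_mul_of_nonneg_right h5 h0.le
  nlinarith [h6]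

lemma arith5 (μ : ℝ) (h0 : 0 < μ) (h1 : μ ≤ 1/24) : μ^3 ≤ 1/24 := by
  have h3 : μ^3 ≤ (1/24)^3 := pow_le_pow_left₀ h0.le h1 3
  linarith

theorem main_part (r c : ℝ) (hr : 0 < r) (hrc : r < c)
    (μ : ℝ) (hμ0 : 0 < μ) (hμ1 : μ ≤ 1/24)
    (t : ℝ) (ht0 : 0 < t) (ht2 : t ≤ 1/2)
    (htb : t ^ 2 < μ^12 * r^4 / (256*c^3))
    (θ : ℝ) (a : ℂ) (η : Fin 3 → ℂ) (ζ : ℂ)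
    (hA0 : 0 < ‖a‖) (hA1 : ‖a‖ < 1)
    (hη : ∀ j, ‖η j‖ < 1) (hζ : 1 < ‖ζ‖)
    (hpoly : ∀ w : ℂ,
      r * (w - a) + c * w ^ 3 * (1 - (starRingEnd ℂ) a * w) =
        -c * (starRingEnd ℂ) a * (w - ζ) * (w - η 0) * (w - η 1) * (w - η 2))
    (hcon : a * r * (((1 - t : ℝ) / t : ℝ) : ℂ) ^ 2 * (η 0 * η 1 * η 2) ^ 3 =
      Complex.exp (6 * θ * Complex.I)) :
    ‖a‖ < μ^3 ∧
    ‖η 0 + η 1 + η 2‖ ≤ 6*μ^3 ∧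
    ‖η 0 * η 1 + η 0 * η 2 + η 1 * η 2 - (r:ℂ)/(c:ℂ)‖ ≤ μ ∧
    (∃ j, ‖η j‖ ≤ 2*μ) := by
  have hc : 0 < c := hr.trans hrc
  have hc0 : (c:ℂ) ≠ 0 := by exact_mod_cast hc.ne'
  have ha0 : a ≠ 0 := by
    intro h; rw [h] at hA0; simp at hA0
  have hb0 : (starRingEnd ℂ) a ≠ 0 := by
    simpa using ha0
  have h0' := hpoly 0
  have h1' := hpoly 1
  have hm1' := hpoly (-1)
  have h2' := hpoly 2
  have E1c : (c:ℂ) * (starRingEnd ℂ) a * (ζ + (η 0 + η 1 + η 2)) = c := by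
    linear_combination (-1/6 : ℂ) * h2' + (1/2 : ℂ) * h1' + (1/6 : ℂ) * hm1' + (-1/2 : ℂ) * h0'
  have E2c : (c:ℂ) * (starRingEnd ℂ) a * (ζ * (η 0 + η 1 + η 2) + (η 0*η 1 + η 0*η 2 + η 1*η 2)) = 0 := by
    linear_combination (1/2 : ℂ) * h1' + (1/2 : ℂ) * hm1' - h0'
  have E3c : (c:ℂ) * (starRingEnd ℂ) a * (ζ * (η 0*η 1 + η 0*η 2 + η 1*η 2) + η 0*η 1*η 2) = r := by
    linear_combination (1/6 : ℂ) * h2' - h1' + (1/3 : ℂ) * hm1' + (1/2 : ℂ) * h0'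
  have E4c : (c:ℂ) * (starRingEnd ℂ) a * (ζ * (η 0*η 1*η 2)) = r * a := by
    linear_combination h0'
  -- complex-level consequences
  have E1' : (starRingEnd ℂ) a * (ζ + (η 0 + η 1 + η 2)) = 1 :=
    mul_left_cancel₀ hc0 (by linear_combination E1c)
  have E2' : ζ * (η 0 + η 1 + η 2) = -(η 0*η 1 + η 0*η 2 + η 1*η 2) :=
    mul_left_cancel₀ (mul_ne_zero hc0 hb0) (by linear_combination E2c)
  have hbζ : (starRingEnd ℂ) a * ζ = 1 - (starRingEnd ℂ) a * (η 0 + η 1 + η 2) := by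
    linear_combination E1'
  have hqq : (c:ℂ) * (η 0*η 1 + η 0*η 2 + η 1*η 2) - r
      = (c:ℂ) * (starRingEnd ℂ) a * ((η 0 + η 1 + η 2) * (η 0*η 1 + η 0*η 2 + η 1*η 2) - η 0*η 1*η 2) := by
    linear_combination E3c - (c:ℂ) * (η 0*η 1 + η 0*η 2 + η 1*η 2) * E1'
  -- real quantities
  have habm : ‖(starRingEnd ℂ) a‖ = ‖a‖ := Complex.norm_conj a
  have hS3 : ‖η 0 + η 1 + η 2‖ ≤ 3 := by
    have h1 := norm_add_le (η 0 + η 1) (η 2)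
    have h2 := norm_add_le (η 0) (η 1)
    have := hη 0; have := hη 1; have := hη 2
    linarith
  have hQ3 : ‖η 0*η 1 + η 0*η 2 + η 1*η 2‖ ≤ 3 := by
    have h1 := norm_add_le (η 0*η 1 + η 0*η 2) (η 1*η 2)
    have h2 := norm_add_le (η 0*η 1) (η 0*η 2)
    have e0 : ‖η 0 * η 1‖ ≤ 1 := by
      rw [norm_mul]
      exact mul_le_one₀ (hη 0).le (norm_nonneg _) (hη 1).le
    have e1 : ‖η 0 * η 2‖ ≤ 1 := by
      rw [norm_mul]
      exact mul_le_one₀ (hη 0).le (norm_nonneg _) (hη 2).le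
    have e2 : ‖η 1 * η 2‖ ≤ 1 := by
      rw [norm_mul]
      exact mul_le_one₀ (hη 1).le (norm_nonneg _) (hη 2).le
    linarith
  -- notation for real quantities
  have hAS : ‖(starRingEnd ℂ) a * (η 0 + η 1 + η 2)‖
      = ‖a‖ * ‖η 0 + η 1 + η 2‖ := by rw [norm_mul, habm]
  have hup : ‖a‖ * ‖ζ‖ ≤ 1 + ‖a‖ * ‖η 0 + η 1 + η 2‖ := by
    have h1 : ‖(starRingEnd ℂ) a * ζ‖
        ≤ ‖(1:ℂ)‖ + ‖(starRingEnd ℂ) a * (η 0 + η 1 + η 2)‖ := by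
      rw [hbζ]; exact abs_sub_le''' _ _
    rw [norm_mul, habm, hAS, norm_one] at h1
    exact h1
  have hlow : 1 - ‖a‖ * ‖η 0 + η 1 + η 2‖ ≤ ‖a‖ * ‖ζ‖ := by
    have h1 : ‖(1:ℂ)‖ ≤ ‖(starRingEnd ℂ) a * ζ‖
        + ‖(starRingEnd ℂ) a * (η 0 + η 1 + η 2)‖ := by
      have h2 := norm_add_le ((starRingEnd ℂ) a * ζ) ((starRingEnd ℂ) a * (η 0 + η 1 + η 2))
      rw [show (starRingEnd ℂ) a * ζ + (starRingEnd ℂ) a * (η 0 + η 1 + η 2)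
        = (1 - (starRingEnd ℂ) a * (η 0 + η 1 + η 2)) + (starRingEnd ℂ) a * (η 0 + η 1 + η 2) from by
          rw [hbζ], show (1 - (starRingEnd ℂ) a * (η 0 + η 1 + η 2)) + (starRingEnd ℂ) a * (η 0 + η 1 + η 2) = 1 from by ring] at h2
      exact h2
    rw [norm_mul, habm, hAS, norm_one] at h1
    linarith
  -- e4 modulus
  have e4 : c * (‖a‖ * (‖ζ‖ * (‖η 0‖ * ‖η 1‖ * ‖η 2‖))) = r * ‖a‖ := by
    have h1 := congrArg (‖·‖) E4c
    simp only [norm_mul, Complex.norm_real, Real.norm_eq_abs, Complex.norm_conj] at h1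
    rw [abs_of_pos hr, abs_of_pos hc] at h1
    linear_combination h1
  -- constraint modulus
  have hX0 : 0 < (1-t)/t := by
    apply div_pos <;> linarith
  have habs : ‖a‖ * (r * (((1-t)/t)^2 * (‖η 0‖ * ‖η 1‖ * ‖η 2‖)^3)) = 1 := by
    have h1 := congrArg (‖·‖) hcon
    have hexp : ‖Complex.exp (6 * θ * Complex.I)‖ = 1 := by
      rw [show (6 * (θ:ℂ) * Complex.I) = ((6*θ : ℝ):ℂ) * Complex.I from by push_cast; ring]
      exact Complex.norm_exp_ofReal_mul_I _
    rw [hexp] at h1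
    simp only [norm_mul, norm_pow, Complex.norm_real, Real.norm_eq_abs] at h1
    rw [abs_of_pos hr, abs_of_pos hX0] at h1
    linear_combination h1
  -- abbreviation facts
  have hA := hA0
  have hp0 : (0:ℝ) ≤ ‖η 0‖ * ‖η 1‖ * ‖η 2‖ := by positivity
  have hAZ4 : ‖a‖ * ‖ζ‖ ≤ 4 := by nlinarith [hup, hS3, hA1, norm_nonneg a, norm_nonneg (η 0 + η 1 + η 2)]
  have step1 : r * ‖a‖ ≤ 4 * (c * (‖η 0‖ * ‖η 1‖ * ‖η 2‖)) := by
    nlinarith [e4, mul_le_mul_of_nonneg_right hAZ4 (show (0:ℝ) ≤ c * (‖η 0‖ * ‖η 1‖ * ‖η 2‖) by positivity)]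
  have step2 : (r * ‖a‖)^3 ≤ (4 * (c * (‖η 0‖ * ‖η 1‖ * ‖η 2‖)))^3 :=
    pow_le_pow_left₀ (by positivity) step1 3
  have hArX : (0:ℝ) ≤ ‖a‖ * (r * ((1-t)/t)^2) := by positivity
  have hmain : r^4 * (((1-t)/t)^2 * (‖a‖)^4) ≤ 64 * c^3 :=
    arith1 _ _ _ _ _ (norm_nonneg a) hr hc hX0 habs step1
  have h2tX : 1 ≤ 2*t*((1-t)/t) := by
    have h1 : 2*t*((1-t)/t) = 2*(1-t) := by field_simp
    rw [h1]; linarith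
  have h4t2X2 : 1 ≤ 4*t^2*((1-t)/t)^2 := by nlinarith [h2tX, ht0, hX0]
  have hrA4 : r^4 * (‖a‖)^4 ≤ 256 * c^3 * t^2 := by
    nlinarith [mul_le_mul_of_nonneg_left hmain (show (0:ℝ) ≤ 4*t^2 by positivity),
      mul_le_mul_of_nonneg_right h4t2X2 (show (0:ℝ) ≤ r^4 * (‖a‖)^4 by positivity)]
  have hYid : 256*c^3*(μ^12*r^4/(256*c^3)) = μ^12*r^4 := by field_simp
  have hfin : (‖a‖)^4 < μ^12 := by nlinarith [hrA4, htb, pow_pos hr 4, pow_pos hc 3]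
  have hAμ : ‖a‖ < μ^3 := by
    have := lt_of_pow_lt_pow_left₀ 4 (show (0:ℝ) ≤ μ^3 by positivity)
      (show (‖a‖)^4 < (μ^3)^4 from by rw [show (μ^3)^4 = μ^12 from by ring]; exact hfin)
    exact this
  have hA24 : ‖a‖ ≤ 1/24 := (hAμ.trans_le (arith5 μ hμ0 hμ1)).le
  have hlow' : 1 - 3*‖a‖ ≤ ‖a‖ * ‖ζ‖ := by
    nlinarith [hlow, hS3, norm_nonneg a]
  -- product bound
  have hpb : ‖η 0‖ * ‖η 1‖ * ‖η 2‖ ≤ 2*μ^3 :=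
    arith2 _ _ _ _ _ _ hc hrc (norm_nonneg a) hAμ.le hA24 hp0 hlow' e4
  -- sum bound
  have hζS : ‖ζ‖ * ‖η 0 + η 1 + η 2‖ = ‖η 0*η 1 + η 0*η 2 + η 1*η 2‖ := by
    have h1 := congrArg (‖·‖) E2'
    simp only [norm_mul, norm_neg, norm_neg] at h1
    linear_combination h1
  have hSb : ‖η 0 + η 1 + η 2‖ ≤ 6*μ^3 :=
    arith3 _ _ _ _ _ (norm_nonneg a) hAμ.le hA24 (norm_nonneg _) hQ3 hlow' hζS
  -- q bound
  have hqb : ‖η 0 * η 1 + η 0 * η 2 + η 1 * η 2 - (r:ℂ)/(c:ℂ)‖ ≤ μ := by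
    have hfactor : (c:ℂ) * (η 0*η 1 + η 0*η 2 + η 1*η 2 - (r:ℂ)/(c:ℂ))
        = (c:ℂ) * (η 0*η 1 + η 0*η 2 + η 1*η 2) - r := by
      field_simp
    have h5 : ‖(c:ℂ) * (η 0*η 1 + η 0*η 2 + η 1*η 2 - (r:ℂ)/(c:ℂ))‖
        = ‖(c:ℂ) * (starRingEnd ℂ) a * ((η 0 + η 1 + η 2) * (η 0*η 1 + η 0*η 2 + η 1*η 2) - η 0*η 1*η 2)‖ := by
      rw [hfactor, hqq]
    rw [norm_mul, Complex.norm_real, Real.norm_eq_abs, abs_of_pos hc] at h5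
    rw [norm_mul, norm_mul, Complex.norm_real, Real.norm_eq_abs, abs_of_pos hc, habm] at h5
    have h6 : ‖(η 0 + η 1 + η 2) * (η 0*η 1 + η 0*η 2 + η 1*η 2) - η 0*η 1*η 2‖
        ≤ ‖η 0 + η 1 + η 2‖ * ‖η 0*η 1 + η 0*η 2 + η 1*η 2‖
          + ‖η 0‖ * ‖η 1‖ * ‖η 2‖ := by
      have h7 := abs_sub_le''' ((η 0 + η 1 + η 2) * (η 0*η 1 + η 0*η 2 + η 1*η 2)) (η 0*η 1*η 2)
      rw [norm_mul, norm_mul, norm_mul] at h7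
      exact h7
    have h8 : ‖a‖ * ‖(η 0 + η 1 + η 2) * (η 0*η 1 + η 0*η 2 + η 1*η 2) - η 0*η 1*η 2‖
        ≤ μ^3 * (6*μ^3 * 3 + 2*μ^3) := by
      apply mul_le_mul hAμ.le _ (norm_nonneg _) (by positivity)
      calc ‖(η 0 + η 1 + η 2) * (η 0*η 1 + η 0*η 2 + η 1*η 2) - η 0*η 1*η 2‖ ≤ _ := h6
        _ ≤ 6*μ^3 * 3 + 2*μ^3 := by
            have := mul_le_mul hSb hQ3 (norm_nonneg _) (by positivity)
            linarith [hpb, this]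
    have hcabs : c * ‖η 0 * η 1 + η 0 * η 2 + η 1 * η 2 - (r:ℂ)/(c:ℂ)‖ ≤ c * μ := by
      rw [h5]
      have h9 := mul_le_mul_of_nonneg_left h8 hc.le
      have hμ5 : μ^3 * (6*μ^3 * 3 + 2*μ^3) ≤ μ := arith4 μ hμ0 hμ1
      have h10 := mul_le_mul_of_nonneg_left hμ5 hc.le
      linarith
    exact le_of_mul_le_mul_left (by linarith) hc
  -- small root
  have hsmall : ∃ j, ‖η j‖ ≤ 2*μ := by
    by_contra hcon'
    push_neg at hcon'
    have h1 := mul_lt_mul'' (mul_lt_mul'' (hcon' 0) (hcon' 1) (by positivity) (by positivity)) (hcon' 2) (by positivity) (by positivity)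
    have hμ3pos : 0 < μ^3 := pow_pos hμ0 3
    nlinarith [hpb, h1, hμ3pos]
  exact ⟨hAμ, hSb, hqb, hsmall⟩


lemma arith6 (μ : ℝ) (h0 : 0 < μ) (h1 : μ ≤ 1/24) : μ^3 ≤ μ := by
  have h2 : μ^2 ≤ 1 := by nlinarith
  have h3 := mul_le_mul_of_nonneg_right h2 h0.le
  calc μ^3 = μ^2*μ := by ring
    _ ≤ 1*μ := h3
    _ = μ := one_mul μ

/-- Asymptotics of Lemma `h0a` in the case `I = ∅`: as `t → 0`, any solution of the
factorization identity together with the boundary constraint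
`a·r·((1−t)/t)²·(η₀η₁η₂)³ = e^{6iθ}` satisfies, after a permutation of the indices,
`a = O(t^{1/2})`, `η₀ = O(t^{1/2})`, `η₁ → i√(r/c)`, `η₂ → −i√(r/c)`. -/
theorem stmt_3 (r c : ℝ) (hr : 0 < r) (hrc : r < c) :
    ∀ ε > 0, ∃ t₀ ∈ Set.Ioo (0 : ℝ) 1, ∀ t ∈ Set.Ioo (0 : ℝ) t₀, ∀ θ : ℝ,
      ∀ a : ℂ, ∀ η : Fin 3 → ℂ, ∀ ζ : ℂ,
        0 < ‖a‖ → ‖a‖ < 1 →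
        (∀ j, ‖η j‖ < 1) → 1 < ‖ζ‖ →
        (∀ w : ℂ,
          r * (w - a) + c * w ^ 3 * (1 - (starRingEnd ℂ) a * w) =
            -c * (starRingEnd ℂ) a * (w - ζ) * (w - η 0) * (w - η 1) * (w - η 2)) →
        a * r * (((1 - t : ℝ) / t : ℝ) : ℂ) ^ 2 * (η 0 * η 1 * η 2) ^ 3 =
          Complex.exp (6 * θ * Complex.I) →
        ∃ σ : Equiv.Perm (Fin 3),
          ‖a‖ < ε ∧
          ‖η (σ 0)‖ < ε ∧
          ‖η (σ 1) - Complex.I * Real.sqrt (r / c)‖ < ε ∧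
          ‖η (σ 2) + Complex.I * Real.sqrt (r / c)‖ < ε := by
  intro ε hε
  have hc : 0 < c := hr.trans hrc
  have hrc0 : 0 < r/c := div_pos hr hc
  obtain ⟨μ, hμdef⟩ : ∃ μ : ℝ, μ = min (min (1/24) (ε/3)) (min (ε^2/6) ((r/c)/20)) := ⟨_, rfl⟩
  have hμ0 : 0 < μ := by
    rw [hμdef]
    exact lt_min (lt_min (by norm_num) (by positivity)) (lt_min (by positivity) (by positivity))
  have hμ1 : μ ≤ 1/24 := hμdef ▸ (min_le_left _ _).trans (min_le_left _ _)
  have hμ2 : μ ≤ ε/3 := hμdef ▸ (min_le_left _ _).trans (min_le_right _ _)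
  have hμ3 : μ ≤ ε^2/6 := hμdef ▸ (min_le_right _ _).trans (min_le_left _ _)
  have hμ4 : μ ≤ (r/c)/20 := hμdef ▸ (min_le_right _ _).trans (min_le_right _ _)
  obtain ⟨t₀, ht₀def⟩ : ∃ t₀ : ℝ, t₀ = min (1/2) (Real.sqrt (μ^12 * r^4 / (256*c^3))) := ⟨_, rfl⟩
  refine ⟨t₀, ⟨?_, ?_⟩, ?_⟩
  · rw [ht₀def]
    exact lt_min (by norm_num) (Real.sqrt_pos.mpr (by positivity))
  · rw [ht₀def]
    exact lt_of_le_of_lt (min_le_left _ _) (by norm_num)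
  intro t ht θ a η ζ hA0 hA1 hη hζ hpoly hcon
  have ht0 : 0 < t := ht.1
  have ht2 : t ≤ 1/2 := le_of_lt (lt_of_lt_of_le ht.2 (ht₀def ▸ min_le_left _ _))
  have htb : t^2 < μ^12 * r^4 / (256*c^3) := by
    have h1 : t < Real.sqrt (μ^12 * r^4 / (256*c^3)) :=
      lt_of_lt_of_le ht.2 (ht₀def ▸ min_le_right _ _)
    exact (Real.lt_sqrt ht0.le).mp h1
  obtain ⟨hAμ, hSb, hqb, j₀, hj₀⟩ :=
    main_part r c hr hrc μ hμ0 hμ1 t ht0 ht2 htb θ a η ζ hA0 hA1 hη hζ hpoly hcon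
  have hAε : ‖a‖ < ε := by
    have h1 := arith6 μ hμ0 hμ1
    linarith
  have h2με : 2*μ < ε := by linarith
  fin_cases j₀
  · rcases key_lemma r c μ ε hr hrc hμ0 hε hμ1 hμ3 hμ4 (η 1) (η 2) (η 0)
      (hη 1).le (hη 2).le hj₀ hSb hqb with h | h
    · exact ⟨Equiv.refl _, hAε, lt_of_le_of_lt hj₀ h2με, h.1, h.2⟩
    · refine ⟨Equiv.swap 1 2, hAε, ?_, ?_, ?_⟩
      · rw [show (Equiv.swap (1:Fin 3) 2) 0 = 0 from by decide]
        exact lt_of_le_of_lt hj₀ h2με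
      · rw [show (Equiv.swap (1:Fin 3) 2) 1 = 2 from by decide]
        exact h.1
      · rw [show (Equiv.swap (1:Fin 3) 2) 2 = 1 from by decide]
        exact h.2
  · rcases key_lemma r c μ ε hr hrc hμ0 hε hμ1 hμ3 hμ4 (η 0) (η 2) (η 1)
      (hη 0).le (hη 2).le hj₀
      (by rw [show η 1 + η 0 + η 2 = η 0 + η 1 + η 2 from by ring]; exact hSb)
      (by rw [show η 1 * η 0 + η 1 * η 2 + η 0 * η 2 - (r:ℂ)/(c:ℂ)
          = η 0 * η 1 + η 0 * η 2 + η 1 * η 2 - (r:ℂ)/(c:ℂ) from by ring]; exact hqb) with h | h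
    · refine ⟨Equiv.swap 0 1, hAε, ?_, ?_, ?_⟩
      · rw [show (Equiv.swap (0:Fin 3) 1) 0 = 1 from by decide]
        exact lt_of_le_of_lt hj₀ h2με
      · rw [show (Equiv.swap (0:Fin 3) 1) 1 = 0 from by decide]
        exact h.1
      · rw [show (Equiv.swap (0:Fin 3) 1) 2 = 2 from by decide]
        exact h.2
    · refine ⟨Equiv.swap 0 1 * Equiv.swap 1 2, hAε, ?_, ?_, ?_⟩
      · rw [show (Equiv.swap (0:Fin 3) 1 * Equiv.swap (1:Fin 3) 2) 0 = 1 from by decide]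
        exact lt_of_le_of_lt hj₀ h2με
      · rw [show (Equiv.swap (0:Fin 3) 1 * Equiv.swap (1:Fin 3) 2) 1 = 2 from by decide]
        exact h.1
      · rw [show (Equiv.swap (0:Fin 3) 1 * Equiv.swap (1:Fin 3) 2) 2 = 0 from by decide]
        exact h.2
  · rcases key_lemma r c μ ε hr hrc hμ0 hε hμ1 hμ3 hμ4 (η 0) (η 1) (η 2)
      (hη 0).le (hη 1).le hj₀
      (by rw [show η 2 + η 0 + η 1 = η 0 + η 1 + η 2 from by ring]; exact hSb)
      (by rw [show η 2 * η 0 + η 2 * η 1 + η 0 * η 1 - (r:ℂ)/(c:ℂ)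
          = η 0 * η 1 + η 0 * η 2 + η 1 * η 2 - (r:ℂ)/(c:ℂ) from by ring]; exact hqb) with h | h
    · refine ⟨Equiv.swap 1 2 * Equiv.swap 0 1, hAε, ?_, ?_, ?_⟩
      · rw [show (Equiv.swap (1:Fin 3) 2 * Equiv.swap (0:Fin 3) 1) 0 = 2 from by decide]
        exact lt_of_le_of_lt hj₀ h2με
      · rw [show (Equiv.swap (1:Fin 3) 2 * Equiv.swap (0:Fin 3) 1) 1 = 0 from by decide]
        exact h.1
      · rw [show (Equiv.swap (1:Fin 3) 2 * Equiv.swap (0:Fin 3) 1) 2 = 1 from by decide]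
        exact h.2
    · refine ⟨Equiv.swap 0 2, hAε, ?_, ?_, ?_⟩
      · rw [show (Equiv.swap (0:Fin 3) 2) 0 = 2 from by decide]
        exact lt_of_le_of_lt hj₀ h2με
      · rw [show (Equiv.swap (0:Fin 3) 2) 1 = 1 from by decide]
        exact h.1
      · rw [show (Equiv.swap (0:Fin 3) 2) 2 = 0 from by decide]
        exact h.2
end

section
/- Let 0 < r < c be real numbers. There exists t₀ ∈ (0,1) such that for all t ∈ (0, t₀) and all λ ∈ ℂ with |λ| = 1, the degree 4 polynomial p(z) = (z² − c)² + t·z³·(λ − z) has exactly two roots, counted with multiplicity, in the open right half-plane {z ∈ ℂ : Re z > 0}. -/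
open Polynomial

set_option maxHeartbeats 1600000 in
/-- Computation `β · [D₅] = 2` in Lemma `HomTab`: for `t` small, the polynomial
`(z² − c)² + t·z³·(λ − z)` has exactly two roots (with multiplicity) in the open
right half-plane. -/
theorem stmt_5 (r c : ℝ) (hr : 0 < r) (hrc : r < c) :
    ∃ t₀ ∈ Set.Ioo (0 : ℝ) 1, ∀ t ∈ Set.Ioo (0 : ℝ) t₀, ∀ lam : ℂ, ‖lam‖ = 1 →
      (((X ^ 2 - C (c : ℂ)) ^ 2 + C (t : ℂ) * X ^ 3 * (C lam - X)).roots.filter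
        (fun z : ℂ => 0 < z.re)).card = 2 := by
  have hc : (0:ℝ) < c := hr.trans hrc
  set s : ℝ := Real.sqrt c with hs_def
  have hs : 0 < s := Real.sqrt_pos.mpr hc
  have hs2 : s ^ 2 = c := Real.sq_sqrt hc.le
  set M : ℝ := 1 + 4 * c + 2 * c ^ 2 with hM_def
  have hM1 : 1 ≤ M := by nlinarith
  have hM0 : 0 < M := by linarith
  set K : ℝ := M ^ 3 * (1 + M) with hK_def
  have hK : 0 < K := by positivity
  refine ⟨min (1/2) (min (c^2/(16*K)) (s/2)), ⟨by positivity, ?_⟩, ?_⟩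
  · exact lt_of_le_of_lt (min_le_left _ _) (by norm_num)
  intro t ht lam hlam
  obtain ⟨ht0, ht1⟩ := ht
  have ht_half : t < 1/2 := lt_of_lt_of_le ht1 (min_le_left _ _)
  have ht_K : t ≤ c^2/(16*K) :=
    le_of_lt (lt_of_lt_of_le ht1 ((min_le_right _ _).trans (min_le_left _ _)))
  have ht_s : t < s/2 := lt_of_lt_of_le ht1 ((min_le_right _ _).trans (min_le_right _ _))
  set T : ℂ := (t : ℂ) with hT_def
  have habsT : ‖T‖ = t := by
    rw [hT_def, Complex.norm_real, Real.norm_eq_abs, abs_of_pos ht0]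
  have h1T_eq : (1:ℂ) - T = ((1 - t : ℝ) : ℂ) := by push_cast [hT_def]; ring
  have habs1T : ‖1 - T‖ = 1 - t := by
    rw [h1T_eq, Complex.norm_real, Real.norm_eq_abs, abs_of_pos (by linarith)]
  have h1T : (1:ℂ) - T ≠ 0 := by
    intro h
    rw [h] at habs1T
    simp at habs1T
    linarith
  set u : ℂ := (1 - T)⁻¹ with hu_def
  have hu : u ≠ 0 := inv_ne_zero h1T
  set p : ℂ[X] := (X ^ 2 - C (c : ℂ)) ^ 2 + C T * X ^ 3 * (C lam - X) with hp_def
  set q : ℂ[X] := X ^ 4 + C (T * lam * u) * X ^ 3 + C (-(2*(c:ℂ)) * u) * X ^ 2 + C ((c:ℂ)^2 * u)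
    with hq_def
  have hC1 : C u * (1 - C T) = 1 := by
    rw [← C_1, ← map_sub, ← map_mul, inv_mul_cancel₀ h1T, map_one]
  have hq_eq : q = C u * p := by
    rw [hq_def, hp_def]
    simp only [map_mul, map_neg, map_pow, map_ofNat]
    linear_combination (-(X:ℂ[X])^4) * hC1
  have hmq : q.Monic := by
    rw [hq_def]
    monicity!
  have hq0 : q ≠ 0 := hmq.ne_zero
  have hdegq : q.natDegree = 4 := by
    rw [hq_def]
    compute_degree!
  have hcard : q.roots.card = 4 := by
    rw [splits_iff_card_roots.mp (IsAlgClosed.splits q), hdegq]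
  have hroots : p.roots = q.roots := by rw [hq_eq, roots_C_mul _ hu]
  have hp0 : p ≠ 0 := by
    intro h
    apply hq0
    rw [hq_eq, h, mul_zero]
  -- every root satisfies the equation
  have hroot_mem : ∀ z ∈ q.roots, (z^2 - (c:ℂ))^2 + T * z^3 * (lam - z) = 0 := by
    intro z hz
    rw [← hroots] at hz
    have := (mem_roots hp0).mp hz
    rw [IsRoot, hp_def] at this
    simpa using this
  -- bound on roots
  have hbound : ∀ z ∈ q.roots, ‖z‖ ≤ M := by
    intro z hz
    have he := hroot_mem z hz
    have he2 : (1 - T) * z^4 = -(T*(lam*z^3)) + 2*(c:ℂ)*z^2 + -((c:ℂ)^2) := by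
      linear_combination he
    by_contra hM'
    push_neg at hM'
    set a := ‖z‖ with ha_def
    have ha1 : 1 < a := lt_of_le_of_lt hM1 hM'
    have ha0 : 0 < a := by linarith
    have hlhs : ‖(1 - T) * z^4‖ = (1 - t) * a^4 := by
      rw [norm_mul, norm_pow, habs1T]
    have hrhs : ‖-(T*(lam*z^3)) + 2*(c:ℂ)*z^2 + -((c:ℂ)^2)‖
        ≤ t * a^3 + 2*c*a^2 + c^2 := by
      refine le_trans (norm_add_le _ _) ?_
      have h1 : ‖-(T*(lam*z^3)) + 2*(c:ℂ)*z^2‖ ≤ t*a^3 + 2*c*a^2 := by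
        refine le_trans (norm_add_le _ _) ?_
        have e1 : ‖-(T*(lam*z^3))‖ = t * a^3 := by
          rw [norm_neg, norm_mul, norm_mul, norm_pow, habsT, hlam]
          ring
        have e2 : ‖2*(c:ℂ)*z^2‖ = 2*c*a^2 := by
          rw [norm_mul, norm_mul, norm_pow]
          simp [Complex.norm_real, Real.norm_eq_abs, abs_of_pos hc, Complex.norm_two, ha_def]
        rw [e1, e2]
      have h2 : ‖-((c:ℂ)^2)‖ = c^2 := by
        rw [norm_neg, norm_pow, Complex.norm_real, Real.norm_eq_abs, abs_of_pos hc]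
      rw [h2]
      linarith
    have hineq : (1 - t) * a^4 ≤ t * a^3 + 2*c*a^2 + c^2 := by
      rw [← hlhs, he2]
      exact hrhs
    have h23 : a^2 ≤ a^3 := by nlinarith
    have h03 : 1 ≤ a^3 := by nlinarith
    have hM3 : M * a^3 < a^4 := by
      calc M * a^3 < a * a^3 := mul_lt_mul_of_pos_right hM' (pow_pos ha0 3)
        _ = a^4 := by ring
    have hca : c * a^2 ≤ c * a^3 := mul_le_mul_of_nonneg_left h23 hc.le
    have hc2a : c^2 * 1 ≤ c^2 * a^3 := mul_le_mul_of_nonneg_left h03 (sq_nonneg c)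
    have hta : (1/2 - t) * a^4 ≥ 0 :=
      mul_nonneg (by linarith) (pow_nonneg ha0.le 4)
    have htb : (1/2 - t) * a^3 ≥ 0 :=
      mul_nonneg (by linarith) (pow_nonneg ha0.le 3)
    have hM3' : (1 + 4*c + 2*c^2) * a^3 < a^4 := by rw [hM_def] at hM3; linarith
    linarith [hineq, hca, hc2a, hta, htb, hM3']
  -- each root is close to ±√c
  have habs2 : ∀ z ∈ q.roots, (‖z^2 - (c:ℂ)‖)^2 ≤ t * K := by
    intro z hz
    have he : (z^2 - (c:ℂ))^2 = -(T * z^3 * (lam - z)) := by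
      linear_combination hroot_mem z hz
    have h1 : (‖z^2 - (c:ℂ)‖)^2
        = t * (‖z‖)^3 * ‖lam - z‖ := by
      rw [← norm_pow, he, norm_neg, norm_mul, norm_mul, norm_pow, habsT]
    rw [h1, hK_def]
    have haM : ‖z‖ ≤ M := hbound z hz
    have hlz : ‖lam - z‖ ≤ 1 + M := by
      refine le_trans (norm_sub_le _ _) ?_
      rw [hlam]
      linarith
    have h3 : (‖z‖)^3 ≤ M^3 :=
      pow_le_pow_left₀ (norm_nonneg z) haM 3
    have h0 : (0:ℝ) ≤ ‖lam - z‖ := norm_nonneg _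
    calc t * (‖z‖)^3 * ‖lam - z‖
        = t * ((‖z‖)^3 * ‖lam - z‖) := by ring
      _ ≤ t * (M^3 * (1 + M)) :=
        mul_le_mul_of_nonneg_left (mul_le_mul h3 hlz h0 (by positivity)) ht0.le
  set δ : ℝ := Real.sqrt (t * K) / s with hδ_def
  have hδ0 : 0 ≤ δ := by positivity
  have hδ : δ ≤ s / 4 := by
    have h1 : t * K ≤ c^2/16 := by
      rw [le_div_iff₀ (by positivity)] at ht_K
      linarith
    have h2 : Real.sqrt (t * K) ≤ c / 4 := by
      rw [show c^2/16 = (c/4)^2 by ring] at h1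
      calc Real.sqrt (t * K) ≤ Real.sqrt ((c/4)^2) := Real.sqrt_le_sqrt h1
        _ = c/4 := Real.sqrt_sq (by positivity)
    rw [hδ_def, div_le_div_iff₀ hs (by norm_num)]
    have h3 : s * s = c := by rw [← hs2]; ring
    linarith
  have hdich : ∀ z ∈ q.roots,
      ‖z - (s:ℂ)‖ ≤ δ ∨ ‖z + (s:ℂ)‖ ≤ δ := by
    intro z hz
    set A := ‖z - (s:ℂ)‖ with hA_def
    set B := ‖z + (s:ℂ)‖ with hB_def
    have hA0 : 0 ≤ A := norm_nonneg _
    have hB0 : 0 ≤ B := norm_nonneg _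
    have hsc : ((s:ℝ):ℂ)^2 = ((c:ℝ):ℂ) := by
      norm_cast
    have hfac : A * B = ‖z^2 - (c:ℂ)‖ := by
      rw [hA_def, hB_def, ← norm_mul]
      congr 1
      linear_combination -hsc
    have hprod : A * B ≤ Real.sqrt (t * K) := by
      rw [← Real.sqrt_sq (mul_nonneg hA0 hB0)]
      apply Real.sqrt_le_sqrt
      rw [hfac]
      exact habs2 z hz
    rcases le_or_gt s B with hB | hB
    · left
      rw [hδ_def, le_div_iff₀ hs]
      calc A * s ≤ A * B := mul_le_mul_of_nonneg_left hB hA0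
        _ ≤ _ := hprod
    · right
      have h2s : ‖(z + (s:ℂ)) - (z - (s:ℂ))‖ = 2 * s := by
        have e : (z + (s:ℂ)) - (z - (s:ℂ)) = 2 * (s:ℂ) := by ring
        rw [e, norm_mul, Complex.norm_two, Complex.norm_real, Real.norm_eq_abs, abs_of_pos hs]
      have hAB : 2 * s ≤ B + A := by
        rw [← h2s]
        exact norm_sub_le _ _
      have hsA : s < A := by linarith
      rw [hδ_def, le_div_iff₀ hs]
      calc B * s ≤ B * A := mul_le_mul_of_nonneg_left hsA.le hB0
        _ = A * B := mul_comm B A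
        _ ≤ _ := hprod
  have hre_near : ∀ z ∈ q.roots, ‖z - (s:ℂ)‖ ≤ δ → |z.re - s| ≤ δ := by
    intro z _ h
    calc |z.re - s| = |(z - (s:ℂ)).re| := by simp
      _ ≤ ‖z - (s:ℂ)‖ := Complex.abs_re_le_norm _
      _ ≤ δ := h
  have hre_near' : ∀ z ∈ q.roots, ‖z + (s:ℂ)‖ ≤ δ → |z.re + s| ≤ δ := by
    intro z _ h
    calc |z.re + s| = |(z + (s:ℂ)).re| := by simp
      _ ≤ ‖z + (s:ℂ)‖ := Complex.abs_re_le_norm _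
      _ ≤ δ := h
  have hplus : ∀ z ∈ q.roots, 0 < z.re → s - δ ≤ z.re ∧ z.re ≤ s + δ := by
    intro z hz hzre
    rcases hdich z hz with h | h
    · have := abs_le.mp (hre_near z hz h)
      constructor <;> linarith [this.1, this.2]
    · have := abs_le.mp (hre_near' z hz h)
      exfalso
      linarith [this.2]
  have hminus : ∀ z ∈ q.roots, ¬ (0 < z.re) → -s - δ ≤ z.re ∧ z.re ≤ -s + δ := by
    intro z hz hzre
    rcases hdich z hz with h | h
    · have := abs_le.mp (hre_near z hz h)
      exfalso
      apply hzre
      linarith [this.1]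
    · have := abs_le.mp (hre_near' z hz h)
      constructor <;> linarith [this.1, this.2]
  -- sum of roots
  have hnext : q.nextCoeff = -q.roots.sum :=
    (IsAlgClosed.splits q).nextCoeff_eq_neg_sum_roots_of_monic hmq
  have hnc : q.nextCoeff = T * lam * u := by
    rw [nextCoeff_of_natDegree_pos (by rw [hdegq]; norm_num), hdegq, hq_def]
    simp only [coeff_add, coeff_C_mul, coeff_X_pow, coeff_C]
    norm_num
  have hsum : q.roots.sum = -(T * lam * u) := by
    rw [← hnc, hnext, neg_neg]
  have habsu : ‖u‖ = (1 - t)⁻¹ := by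
    rw [hu_def, norm_inv, habs1T]
  have hSabs : ‖q.roots.sum‖ ≤ 2 * t := by
    rw [hsum, norm_neg, norm_mul, norm_mul, habsT, hlam, habsu]
    have h1 : (1 - t)⁻¹ ≤ 2 := by
      rw [← one_div, div_le_iff₀ (by linarith)]
      linarith
    have : t * 1 * (1-t)⁻¹ ≤ t * 1 * 2 := by
      apply mul_le_mul_of_nonneg_left h1 (by linarith)
    linarith
  have hre_sum_abs : |q.roots.sum.re| ≤ 2 * t :=
    le_trans (Complex.abs_re_le_norm _) hSabs
  -- counting
  rw [hp_def] at *
  rw [hroots]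
  set P := q.roots.filter (fun z : ℂ => 0 < z.re) with hP_def
  set N := q.roots.filter (fun z : ℂ => ¬ 0 < z.re) with hN_def
  have hPN : P + N = q.roots := Multiset.filter_add_not _ _
  set k := P.card with hk_def
  have hcards : k + N.card = 4 := by
    rw [hk_def, hN_def, hP_def, ← Multiset.card_add, hPN, hcard]
  have hre_split : (P.map Complex.re).sum + (N.map Complex.re).sum = q.roots.sum.re := by
    have h1 : (Multiset.map Complex.re q.roots).sum = q.roots.sum.re := by
      rw [show Complex.re = ⇑Complex.reAddGroupHom from rfl]
      exact (map_multiset_sum Complex.reAddGroupHom q.roots).symm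
    rw [← h1, ← hPN, Multiset.map_add, Multiset.sum_add]
  have hSP_lb : (k:ℝ) * (s - δ) ≤ (P.map Complex.re).sum := by
    have h := Multiset.card_nsmul_le_sum (s := P.map Complex.re) (a := s - δ) ?_
    · rwa [Multiset.card_map, nsmul_eq_mul] at h
    · intro x hx
      obtain ⟨z, hzP, rfl⟩ := Multiset.mem_map.mp hx
      obtain ⟨hzq, hzre⟩ := Multiset.mem_filter.mp hzP
      exact (hplus z hzq hzre).1
  have hSP_ub : (P.map Complex.re).sum ≤ (k:ℝ) * (s + δ) := by
    have h := Multiset.sum_le_card_nsmul (P.map Complex.re) (s + δ) ?_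
    · rwa [Multiset.card_map, nsmul_eq_mul] at h
    · intro x hx
      obtain ⟨z, hzP, rfl⟩ := Multiset.mem_map.mp hx
      obtain ⟨hzq, hzre⟩ := Multiset.mem_filter.mp hzP
      exact (hplus z hzq hzre).2
  have hSN_lb : ((N.card):ℝ) * (-s - δ) ≤ (N.map Complex.re).sum := by
    have h := Multiset.card_nsmul_le_sum (s := N.map Complex.re) (a := -s - δ) ?_
    · rwa [Multiset.card_map, nsmul_eq_mul] at h
    · intro x hx
      obtain ⟨z, hzP, rfl⟩ := Multiset.mem_map.mp hx
      obtain ⟨hzq, hzre⟩ := Multiset.mem_filter.mp hzP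
      exact (hminus z hzq hzre).1
  have hSN_ub : (N.map Complex.re).sum ≤ ((N.card):ℝ) * (-s + δ) := by
    have h := Multiset.sum_le_card_nsmul (N.map Complex.re) (-s + δ) ?_
    · rwa [Multiset.card_map, nsmul_eq_mul] at h
    · intro x hx
      obtain ⟨z, hzP, rfl⟩ := Multiset.mem_map.mp hx
      obtain ⟨hzq, hzre⟩ := Multiset.mem_filter.mp hzP
      exact (hminus z hzq hzre).2
  have hk4 : k ≤ 4 := by omega
  have hNk : ((N.card):ℝ) = 4 - (k:ℝ) := by
    have : N.card = 4 - k := by omega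
    rw [this]
    push_cast [Nat.cast_sub hk4]
    ring
  rw [hNk] at hSN_lb hSN_ub
  obtain ⟨hre1, hre2⟩ := abs_le.mp hre_sum_abs
  show k = 2
  interval_cases k <;> [skip; skip; rfl; skip; skip] <;>
    (exfalso; push_cast at hSP_lb hSP_ub hSN_lb hSN_ub; nlinarith)
end

section
/- Let K ∈ ℂ with K ≠ 0, and set R = 2·|K|^{−1/4}. There exists δ > 0 such that for every function g : ℂ → ℂ that is complex-differentiable on the open ball of radius R centered at 0 and satisfies |g(a)| ≤ δ and |g′(a)| ≤ δ for all a with |a| < R, the set {a ∈ ℂ : |a| < R and K·a⁴ + g(a) = 1} has exactly 4 elements. -/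
open Metric Set

lemma factor4 (z a : ℂ) : z^4 - a^4 = (z - a) * (z + a) * (z - Complex.I*a) * (z + Complex.I*a) := by
  linear_combination (a^2*(z^2-a^2)) * Complex.I_sq

lemma key (K : ℂ) (hK : K ≠ 0) (ρ : ℝ) (hρ : 0 < ρ)
    (hKρ : ‖K‖ * ρ^4 = 1)
    (g : ℂ → ℂ) (hg : DifferentiableOn ℂ g (Metric.ball 0 (2*ρ)))
    (hbd : ∀ a : ℂ, ‖a‖ < 2*ρ →
      ‖g a‖ ≤ min ρ⁻¹ 1 / 8192 ∧ ‖deriv g a‖ ≤ min ρ⁻¹ 1 / 8192)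
    (b : ℂ) (hb4 : b ^ 4 = K⁻¹) (hb : ‖b‖ = ρ) :
    ∃! x, x ∈ Metric.closedBall b (ρ/8) ∧ K * x^4 + g x = 1 := by
  set δ : ℝ := min ρ⁻¹ 1 / 8192 with hδdef
  have hδ0 : 0 ≤ δ := by positivity
  have hδρ : δ * ρ ≤ 1/8192 := by
    have h1 : min ρ⁻¹ 1 ≤ ρ⁻¹ := min_le_left _ _
    have : δ ≤ ρ⁻¹ / 8192 := by rw [hδdef]; linarith
    calc δ * ρ ≤ (ρ⁻¹/8192) * ρ := by nlinarith
    _ = 1/8192 := by field_simp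
  have hδ1 : δ ≤ 1/8192 := by
    have h1 : min ρ⁻¹ 1 ≤ 1 := min_le_right _ _
    rw [hδdef]; linarith
  have hKabs : ‖K‖ = (ρ^4)⁻¹ := eq_inv_of_mul_eq_one_left hKρ
  have hb0 : b ≠ 0 := by
    intro h; rw [h] at hb; simp at hb; linarith
  set c : ℂ := 4 * K * b^3 with hc
  have hc0 : c ≠ 0 := by
    apply mul_ne_zero (mul_ne_zero (by norm_num) hK) (pow_ne_zero _ hb0)
  have hcabs : ‖c‖ = 4 / ρ := by
    rw [hc, norm_mul, norm_mul, norm_pow, hb, hKabs]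
    have : ‖(4:ℂ)‖ = 4 := by norm_num [Complex.norm_ofNat]
    rw [this]; field_simp
  have hKb : K * b^4 = 1 := by rw [hb4]; field_simp
  set F : ℂ → ℂ := fun a => a - (K*a^4 + g a - 1)/c with hF
  set s : Set ℂ := Metric.closedBall b (ρ/8) with hs
  have hsub : s ⊆ Metric.ball 0 (2*ρ) := by
    intro a ha
    rw [hs, Metric.mem_closedBall] at ha
    rw [Metric.mem_ball]
    have : dist a 0 ≤ dist a b + dist b 0 := dist_triangle _ _ _
    have hb0' : dist b 0 = ρ := by rw [Complex.dist_eq, sub_zero, hb]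
    linarith
  have habs_le : ∀ a ∈ s, ‖a‖ ≤ 9/8 * ρ := by
    intro a ha
    rw [hs, Metric.mem_closedBall] at ha
    have : dist a 0 ≤ dist a b + dist b 0 := dist_triangle _ _ _
    have hb0' : dist b 0 = ρ := by rw [Complex.dist_eq, sub_zero, hb]
    have : ‖a‖ = dist a 0 := by rw [Complex.dist_eq, sub_zero]
    linarith
  -- derivative of F
  have hFder : ∀ a ∈ Metric.ball (0:ℂ) (2*ρ),
      HasDerivAt F (1 - (K*(4*a^3) + deriv g a)/c) a := by
    intro a ha
    have hga : DifferentiableAt ℂ g a := hg.differentiableAt (Metric.isOpen_ball.mem_nhds ha)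
    have h1 : HasDerivAt (fun x : ℂ => K*x^4 + g x - 1) (K*(4*a^3) + deriv g a) a := by
      have h2 := (hasDerivAt_pow 4 a).const_mul K
      norm_num at h2
      exact (h2.add hga.hasDerivAt).sub_const 1
    exact (hasDerivAt_id' a).sub (h1.div_const c)
  -- derivative bound on s
  have hbound : ∀ a ∈ s, ‖1 - (K*(4*a^3) + deriv g a)/c‖ ≤ 3/4 := by
    intro a ha
    have haρ := habs_le a ha
    have hab : ‖b - a‖ ≤ ρ/8 := by
      have := (Metric.mem_closedBall.mp ha)
      rw [dist_comm, Complex.dist_eq] at this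
      exact this
    have hcube : ‖b^3 - a^3‖ ≤ 217/512 * ρ^3 := by
      have hfac : b^3 - a^3 = (b - a)*(b^2 + b*a + a^2) := by ring
      rw [hfac, norm_mul]
      have h2 : ‖b^2 + b*a + a^2‖ ≤ 217/64 * ρ^2 := by
        calc ‖b^2 + b*a + a^2‖
            ≤ ‖b^2 + b*a‖ + ‖a^2‖ := norm_add_le _ _
          _ ≤ ‖b^2‖ + ‖b*a‖ + ‖a^2‖ := by
              linarith [norm_add_le (b^2) (b*a)]
          _ ≤ ρ^2 + ρ*(9/8*ρ) + (9/8*ρ)^2 := by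
              rw [norm_pow, norm_mul, norm_pow, hb]
              have h0 : (0:ℝ) ≤ ρ := le_of_lt hρ
              have h1 : ‖a‖ ^ 2 ≤ (9/8*ρ)^2 := by
                apply pow_le_pow_left₀ (norm_nonneg a) haρ
              nlinarith [norm_nonneg a]
          _ = 217/64 * ρ^2 := by ring
      calc ‖b - a‖ * ‖b^2 + b*a + a^2‖
          ≤ (ρ/8) * (217/64 * ρ^2) := by
            apply mul_le_mul hab h2 (norm_nonneg _) (by positivity)
        _ = 217/512 * ρ^3 := by ring
    have hrw : 1 - (K*(4*a^3) + deriv g a)/c = (4*K*(b^3 - a^3) - deriv g a)/c := by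
      field_simp
      ring
    rw [hrw, norm_div, hcabs]
    have hga := (hbd a (by simpa [Complex.dist_eq] using hsub ha)).2
    have hnum : ‖4*K*(b^3 - a^3) - deriv g a‖
        ≤ 4 * (ρ^4)⁻¹ * (217/512 * ρ^3) + δ := by
      calc ‖4*K*(b^3 - a^3) - deriv g a‖
          ≤ ‖4*K*(b^3 - a^3)‖ + ‖deriv g a‖ :=
            norm_sub_le _ _
        _ ≤ 4 * (ρ^4)⁻¹ * (217/512 * ρ^3) + δ := by
            rw [norm_mul, norm_mul, hKabs]
            have : ‖(4:ℂ)‖ = 4 := by norm_num [Complex.norm_ofNat]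
            rw [this]
            have := norm_nonneg (b^3 - a^3)
            gcongr
    have h4ρ : (0:ℝ) < 4/ρ := by positivity
    rw [div_le_iff₀ h4ρ]
    have hsimp : 4 * (ρ^4)⁻¹ * (217/512 * ρ^3) = 217/128 * ρ⁻¹ := by
      field_simp
      try ring
    rw [hsimp] at hnum
    have h34 : 3/4 * (4/ρ) = 3 * ρ⁻¹ := by field_simp
    rw [h34]
    have hρinv : (0:ℝ) < ρ⁻¹ := by positivity
    have : δ ≤ (1/8192) * ρ⁻¹ := by
      calc δ = δ * ρ * ρ⁻¹ := by field_simp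
        _ ≤ (1/8192) * ρ⁻¹ := by nlinarith
    linarith
  -- Lipschitz bound on s
  have hconv : Convex ℝ s := convex_closedBall _ _
  have hlip : ∀ x ∈ s, ∀ y ∈ s, ‖F y - F x‖ ≤ 3/4 * ‖y - x‖ := by
    intro x hx y hy
    have := hconv.norm_image_sub_le_of_norm_hasFDerivWithin_le
      (f' := fun a => ContinuousLinearMap.smulRight (1 : ℂ →L[ℂ] ℂ)
        (1 - (K*(4*a^3) + deriv g a)/c))
      (fun a ha => ((hFder a (hsub ha)).hasFDerivAt.hasFDerivWithinAt))
      (fun a ha => by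
        simpa [ContinuousLinearMap.norm_smulRight_apply] using hbound a ha)
      hx hy
    simpa using this
  -- F maps s into s
  have hmaps : MapsTo F s s := by
    intro a ha
    have hbs : b ∈ s := Metric.mem_closedBall_self (by positivity)
    have h1 : ‖F a - F b‖ ≤ 3/4 * ‖a - b‖ := hlip b hbs a ha
    have hab : ‖a - b‖ ≤ ρ/8 := by
      have := Metric.mem_closedBall.mp ha
      rwa [Complex.dist_eq] at this
    have h2 : F b - b = -(g b)/c := by
      rw [hF]
      simp only
      rw [hKb]
      ring
    have h3 : ‖F b - b‖ ≤ δ * ρ / 4 := by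
      rw [h2, neg_div, norm_neg, norm_div, hcabs]
      have hgb : ‖g b‖ ≤ δ := by
        have : ‖b‖ < 2*ρ := by rw [hb]; linarith
        exact (hbd b this).1
      rw [div_div_eq_mul_div]
      have h0 := norm_nonneg (g b)
      nlinarith
    have htri : ‖F a - b‖ ≤ ‖F a - F b‖ + ‖F b - b‖ := by
      have heq : F a - b = (F a - F b) + (F b - b) := by ring
      rw [heq]; exact norm_add_le _ _
    rw [hs, Metric.mem_closedBall, Complex.dist_eq]
    nlinarith
  -- fixed point iff solution
  have hfixiff : ∀ x : ℂ, F x = x ↔ K*x^4 + g x = 1 := by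
    intro x
    rw [hF]
    simp only
    rw [sub_eq_self, div_eq_zero_iff, sub_eq_zero]
    constructor
    · rintro (h | h)
      · exact h
      · exact absurd h hc0
    · intro h; exact Or.inl h
  -- Banach fixed point
  have hsclosed : IsClosed s := Metric.isClosed_closedBall
  haveI : CompleteSpace s := hsclosed.completeSpace_coe
  haveI : Nonempty s := ⟨⟨b, Metric.mem_closedBall_self (by positivity)⟩⟩
  set Ft : s → s := fun x => ⟨F x.1, hmaps x.2⟩ with hFt
  have hlipFt : LipschitzWith (3/4 : NNReal) Ft := by
    apply LipschitzWith.of_dist_le_mul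
    intro x y
    rw [Subtype.dist_eq, Subtype.dist_eq, Complex.dist_eq, Complex.dist_eq]
    have h := hlip y.1 y.2 x.1 x.2
    have hcoe : ((3/4 : NNReal) : ℝ) = 3/4 := by norm_num
    rw [hcoe]
    simpa using h
  have hcontr : ContractingWith (3/4 : NNReal) Ft := ⟨by rw [← NNReal.coe_lt_coe]; push_cast; norm_num, hlipFt⟩
  set x₀ : s := hcontr.fixedPoint Ft with hx₀
  have hx₀fix : Ft x₀ = x₀ := hcontr.fixedPoint_isFixedPt
  have hx₀F : F x₀.1 = x₀.1 := congrArg Subtype.val hx₀fix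
  refine ⟨x₀.1, ⟨x₀.2, (hfixiff _).1 hx₀F⟩, ?_⟩
  rintro y ⟨hy, hysol⟩
  have hyF : F y = y := (hfixiff y).2 hysol
  have h := hlip x₀.1 x₀.2 y hy
  rw [hyF, hx₀F] at h
  have h0 := norm_nonneg (y - x₀.1)
  have : ‖y - x₀.1‖ = 0 := by linarith
  have := norm_eq_zero.mp this
  exact sub_eq_zero.mp this

/-- Perturbation step of Propositions `m=2` and `m=1`: if `g` is holomorphic on the
ball of radius `R = 2·|K|^{−1/4}` with `|g|` and `|g′|` uniformly small there, then
the equation `K·a⁴ + g(a) = 1` has exactly 4 solutions in that ball. -/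
theorem stmt_6 (K : ℂ) (hK : K ≠ 0) :
    ∃ δ > (0 : ℝ), ∀ g : ℂ → ℂ,
      DifferentiableOn ℂ g (Metric.ball 0 (2 * ‖K‖ ^ (-(1/4) : ℝ))) →
      (∀ a : ℂ, ‖a‖ < 2 * ‖K‖ ^ (-(1/4) : ℝ) →
        ‖g a‖ ≤ δ ∧ ‖deriv g a‖ ≤ δ) →
      {a : ℂ | ‖a‖ < 2 * ‖K‖ ^ (-(1/4) : ℝ) ∧
        K * a ^ 4 + g a = 1}.ncard = 4 := by
  have hK0 : 0 < ‖K‖ := norm_pos_iff.mpr hK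
  set ρ : ℝ := ‖K‖ ^ (-(1/4) : ℝ) with hρdef
  have hρ : 0 < ρ := Real.rpow_pos_of_pos hK0 _
  have hρ4 : ρ ^ 4 = (‖K‖)⁻¹ := by
    rw [hρdef, ← Real.rpow_natCast (‖K‖ ^ (-(1/4) : ℝ)) 4,
      ← Real.rpow_mul hK0.le]
    norm_num
    rw [Real.rpow_neg hK0.le, Real.rpow_one]
  have hKρ : ‖K‖ * ρ ^ 4 = 1 := by rw [hρ4]; field_simp
  obtain ⟨a₀, ha₀⟩ := IsAlgClosed.exists_pow_nat_eq (k := ℂ) K⁻¹ (n := 4) (by norm_num)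
  have ha₀abs : ‖a₀‖ = ρ := by
    have h4 : ‖a₀‖ ^ 4 = ρ ^ 4 := by
      rw [← norm_pow, ha₀, norm_inv, hρ4]
    exact (pow_left_inj₀ (norm_nonneg _) hρ.le (by norm_num)).mp h4
  refine ⟨min ρ⁻¹ 1 / 8192, by positivity, ?_⟩
  intro g hg hbd
  -- the four roots
  have hI4 : (Complex.I) ^ 4 = 1 := Complex.I_pow_four
  have hb₂4 : (-a₀) ^ 4 = K⁻¹ := by rw [Even.neg_pow (by decide), ha₀]
  have hb₃4 : (Complex.I * a₀) ^ 4 = K⁻¹ := by rw [mul_pow, hI4, one_mul, ha₀]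
  have hb₄4 : (-(Complex.I * a₀)) ^ 4 = K⁻¹ := by
    rw [Even.neg_pow (by decide), mul_pow, hI4, one_mul, ha₀]
  have hb₂abs : ‖-a₀‖ = ρ := by rw [norm_neg, ha₀abs]
  have hb₃abs : ‖Complex.I * a₀‖ = ρ := by
    rw [norm_mul, Complex.norm_I, one_mul, ha₀abs]
  have hb₄abs : ‖-(Complex.I * a₀)‖ = ρ := by
    rw [norm_neg, hb₃abs]
  obtain ⟨x₁, hx₁, hx₁u⟩ := key K hK ρ hρ hKρ g hg hbd a₀ ha₀ ha₀abs
  obtain ⟨x₂, hx₂, hx₂u⟩ := key K hK ρ hρ hKρ g hg hbd (-a₀) hb₂4 hb₂abs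
  obtain ⟨x₃, hx₃, hx₃u⟩ := key K hK ρ hρ hKρ g hg hbd (Complex.I * a₀) hb₃4 hb₃abs
  obtain ⟨x₄, hx₄, hx₄u⟩ := key K hK ρ hρ hKρ g hg hbd (-(Complex.I * a₀)) hb₄4 hb₄abs
  -- members of the ball
  have hmem : ∀ (b x : ℂ), ‖b‖ = ρ → x ∈ Metric.closedBall b (ρ/8) →
      ‖x‖ < 2 * ρ := by
    intro b x hb hx
    rw [Metric.mem_closedBall] at hx
    have h1 : dist x 0 ≤ dist x b + dist b 0 := dist_triangle _ _ _
    simp only [Complex.dist_eq, sub_zero, hb] at h1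
    rw [Complex.dist_eq] at hx
    calc ‖x‖ ≤ ‖x - b‖ + ρ := h1
      _ ≤ ρ/8 + ρ := by linarith
      _ < 2 * ρ := by linarith
  -- the solution set equals {x₁, x₂, x₃, x₄}
  have hset : {a : ℂ | ‖a‖ < 2 * ρ ∧ K * a ^ 4 + g a = 1}
      = {x₁, x₂, x₃, x₄} := by
    ext a
    simp only [Set.mem_setOf_eq, Set.mem_insert_iff, Set.mem_singleton_iff]
    constructor
    · rintro ⟨ha1, ha2⟩
      -- the product of distances to the four roots is small
      have hprod : (a - a₀) * (a + a₀) * (a - Complex.I*a₀) * (a + Complex.I*a₀)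
          = -(K⁻¹ * g a) := by
        rw [← factor4, ha₀]
        field_simp
        linear_combination ha2
      have habs : ‖a - a₀‖ * ‖a + a₀‖ *
          ‖a - Complex.I*a₀‖ * ‖a + Complex.I*a₀‖
          ≤ ρ^4 * (1/8192) := by
        rw [← norm_mul, ← norm_mul, ← norm_mul, hprod, norm_neg, norm_mul,
          norm_inv, ← hρ4]
        have hga : ‖g a‖ ≤ min ρ⁻¹ 1 / 8192 := (hbd a ha1).1
        have h1 : min ρ⁻¹ 1 / 8192 ≤ 1/8192 := by
          have := min_le_right ρ⁻¹ 1
          linarith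
        have h2 : (0:ℝ) < ρ^4 := by positivity
        gcongr
        linarith
      -- hence a is within ρ/8 of one of the roots
      have hnear : ‖a - a₀‖ ≤ ρ/8 ∨ ‖a - (-a₀)‖ ≤ ρ/8 ∨
          ‖a - Complex.I*a₀‖ ≤ ρ/8 ∨
          ‖a - (-(Complex.I*a₀))‖ ≤ ρ/8 := by
        by_contra h
        push_neg at h
        obtain ⟨h1, h2, h3, h4⟩ := h
        rw [sub_neg_eq_add] at h2 h4
        have hρ8 : (0:ℝ) ≤ ρ/8 := by positivity
        have p12 : (ρ/8) * (ρ/8) < ‖a - a₀‖ * ‖a + a₀‖ :=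
          mul_lt_mul'' h1 h2 hρ8 hρ8
        have p123 : (ρ/8) * (ρ/8) * (ρ/8) < ‖a - a₀‖ * ‖a + a₀‖
            * ‖a - Complex.I*a₀‖ :=
          mul_lt_mul'' p12 h3 (by positivity) hρ8
        have p1234 : (ρ/8) * (ρ/8) * (ρ/8) * (ρ/8) < ‖a - a₀‖ *
            ‖a + a₀‖ * ‖a - Complex.I*a₀‖ *
            ‖a + Complex.I*a₀‖ :=
          mul_lt_mul'' p123 h4 (by positivity) hρ8
        nlinarith
      rcases hnear with h | h | h | h
      · exact Or.inl (hx₁u a ⟨Metric.mem_closedBall.mpr (by rwa [Complex.dist_eq]), ha2⟩)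
      · exact Or.inr (Or.inl (hx₂u a ⟨Metric.mem_closedBall.mpr (by rwa [Complex.dist_eq]), ha2⟩))
      · exact Or.inr (Or.inr (Or.inl
          (hx₃u a ⟨Metric.mem_closedBall.mpr (by rwa [Complex.dist_eq]), ha2⟩)))
      · exact Or.inr (Or.inr (Or.inr
          (hx₄u a ⟨Metric.mem_closedBall.mpr (by rwa [Complex.dist_eq]), ha2⟩)))
    · rintro (rfl | rfl | rfl | rfl)
      · exact ⟨hmem a₀ a ha₀abs hx₁.1, hx₁.2⟩
      · exact ⟨hmem (-a₀) a hb₂abs hx₂.1, hx₂.2⟩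
      · exact ⟨hmem _ a hb₃abs hx₃.1, hx₃.2⟩
      · exact ⟨hmem _ a hb₄abs hx₄.1, hx₄.2⟩
  -- the four points are pairwise distinct
  have hfar : ∀ (b b' x : ℂ), ρ ≤ ‖b - b'‖ →
      x ∈ Metric.closedBall b (ρ/8) → x ∉ Metric.closedBall b' (ρ/8) := by
    intro b b' x hbb hxb hxb'
    rw [Metric.mem_closedBall, Complex.dist_eq] at hxb hxb'
    have h1 : ‖b - b'‖ ≤ ‖x - b‖ + ‖x - b'‖ := by
      calc ‖b - b'‖ = ‖(x - b') - (x - b)‖ := by ring_nf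
        _ ≤ ‖x - b'‖ + ‖x - b‖ := by
            exact norm_sub_le _ _
        _ = ‖x - b‖ + ‖x - b'‖ := by ring
    linarith
  have hsqrt2 : ∀ z : ℂ, Complex.normSq z = 2 → (1:ℝ) ≤ ‖z‖ := by
    intro z hz
    have h1 : ‖z‖ ^ 2 = 2 := by rw [Complex.sq_norm, hz]
    nlinarith [norm_nonneg z]
  have hd12 : ρ ≤ ‖a₀ - (-a₀)‖ := by
    rw [sub_neg_eq_add, show a₀ + a₀ = 2 * a₀ by ring, norm_mul, ha₀abs]
    have : ‖(2:ℂ)‖ = 2 := by norm_num [Complex.norm_ofNat]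
    rw [this]; linarith
  have hd13 : ρ ≤ ‖a₀ - Complex.I * a₀‖ := by
    rw [show a₀ - Complex.I * a₀ = (1 - Complex.I) * a₀ by ring, norm_mul, ha₀abs]
    have h1 : (1:ℝ) ≤ ‖1 - Complex.I‖ := by
      apply hsqrt2; simp [Complex.normSq_apply, Complex.sub_re, Complex.sub_im]; norm_num
    nlinarith
  have hd14 : ρ ≤ ‖a₀ - (-(Complex.I * a₀))‖ := by
    rw [show a₀ - (-(Complex.I * a₀)) = (1 + Complex.I) * a₀ by ring, norm_mul, ha₀abs]
    have h1 : (1:ℝ) ≤ ‖1 + Complex.I‖ := by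
      apply hsqrt2; simp [Complex.normSq_apply, Complex.add_re, Complex.add_im]; norm_num
    nlinarith
  have hd23 : ρ ≤ ‖(-a₀) - Complex.I * a₀‖ := by
    rw [show (-a₀) - Complex.I * a₀ = -((1 + Complex.I) * a₀) by ring,
      norm_neg, norm_mul, ha₀abs]
    have h1 : (1:ℝ) ≤ ‖1 + Complex.I‖ := by
      apply hsqrt2; simp [Complex.normSq_apply, Complex.add_re, Complex.add_im]; norm_num
    nlinarith
  have hd24 : ρ ≤ ‖(-a₀) - (-(Complex.I * a₀))‖ := by
    rw [show (-a₀) - (-(Complex.I * a₀)) = -((1 - Complex.I) * a₀) by ring,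
      norm_neg, norm_mul, ha₀abs]
    have h1 : (1:ℝ) ≤ ‖1 - Complex.I‖ := by
      apply hsqrt2; simp [Complex.normSq_apply, Complex.sub_re, Complex.sub_im]; norm_num
    nlinarith
  have hd34 : ρ ≤ ‖Complex.I * a₀ - (-(Complex.I * a₀))‖ := by
    rw [show Complex.I * a₀ - (-(Complex.I * a₀)) = 2 * (Complex.I * a₀) by ring,
      norm_mul, hb₃abs]
    have : ‖(2:ℂ)‖ = 2 := by norm_num [Complex.norm_ofNat]
    rw [this]; linarith
  have hne12 : x₁ ≠ x₂ := fun h => hfar a₀ (-a₀) x₁ hd12 hx₁.1 (h ▸ hx₂.1)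
  have hne13 : x₁ ≠ x₃ := fun h => hfar a₀ _ x₁ hd13 hx₁.1 (h ▸ hx₃.1)
  have hne14 : x₁ ≠ x₄ := fun h => hfar a₀ _ x₁ hd14 hx₁.1 (h ▸ hx₄.1)
  have hne23 : x₂ ≠ x₃ := fun h => hfar (-a₀) _ x₂ hd23 hx₂.1 (h ▸ hx₃.1)
  have hne24 : x₂ ≠ x₄ := fun h => hfar (-a₀) _ x₂ hd24 hx₂.1 (h ▸ hx₄.1)
  have hne34 : x₃ ≠ x₄ := fun h => hfar _ _ x₃ hd34 hx₃.1 (h ▸ hx₄.1)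
  rw [hset, Set.ncard_insert_of_notMem (by simp [hne12, hne13, hne14]),
    Set.ncard_insert_of_notMem (by simp [hne23, hne24]), Set.ncard_pair hne34]
end

section
/- Let 0 < r < c be real numbers. There exists t₀ ∈ (0,1) such that for all t ∈ (0, t₀) and all θ ∈ ℝ, there is no tuple (a, η₀, η₁, η₂, ζ) of complex numbers with 0 < |a| < 1, |ηⱼ| < 1 for each j, and |ζ| > 1 satisfying both the polynomial identity r(w − a) + c·w³·(1 − conj(a)·w) = −c·conj(a)·(w − ζ)(w − η₀)(w − η₁)(w − η₂) for all w ∈ ℂ, and the constraint a·r·((1−t)/t)² = e^{6iθ}·(η₀η₁η₂)³. -/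
set_option maxHeartbeats 1000000 in
/-- Nonexistence part of Theorem `3fam`: for `t` small, equation (cond2) with
`I = {0,1,2}` (the class `H − 2β − α`) has no solutions. -/
theorem stmt_8 (r c : ℝ) (hr : 0 < r) (hrc : r < c) :
    ∃ t₀ ∈ Set.Ioo (0 : ℝ) 1, ∀ t ∈ Set.Ioo (0 : ℝ) t₀, ∀ θ : ℝ,
      ¬ ∃ a η₀ η₁ η₂ ζ : ℂ,
        0 < ‖a‖ ∧ ‖a‖ < 1 ∧
        ‖η₀‖ < 1 ∧ ‖η₁‖ < 1 ∧ ‖η₂‖ < 1 ∧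
        1 < ‖ζ‖ ∧
        (∀ w : ℂ,
          r * (w - a) + c * w ^ 3 * (1 - (starRingEnd ℂ) a * w) =
            -c * (starRingEnd ℂ) a * (w - ζ) * (w - η₀) * (w - η₁) * (w - η₂)) ∧
        a * r * (((1 - t : ℝ) / t : ℝ) : ℂ) ^ 2 =
          Complex.exp (6 * θ * Complex.I) * (η₀ * η₁ * η₂) ^ 3 := by
  have hc : 0 < c := hr.trans hrc
  have hcr : 0 < c - r := by linarith
  set B := 2 * r ^ 2 / (c ^ 2 * (c - r)) with hBdef
  have hB0 : 0 ≤ B := by positivity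
  refine ⟨1 / (2 + Real.sqrt B), ⟨by positivity, ?_⟩, ?_⟩
  · rw [div_lt_one (by positivity)]
    nlinarith [Real.sqrt_nonneg B]
  rintro t ⟨ht0, ht1⟩ θ ⟨a, η₀, η₁, η₂, ζ, ha0, ha1, h0, h1, h2, hζ, heq, hcon⟩
  set l := (1 - t) / t with hldef
  have hl : 1 + Real.sqrt B < l := by
    rw [hldef, lt_div_iff₀ ht0]
    rw [div_eq_mul_inv, lt_mul_inv_iff₀ (by positivity)] at ht1
    nlinarith [Real.sqrt_nonneg B]
  have hl1 : 1 < l := by nlinarith [Real.sqrt_nonneg B]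
  have hl0 : 0 < l := by linarith
  have hlB : B < l ^ 2 := by nlinarith [Real.sqrt_nonneg B, Real.sq_sqrt hB0]
  set A := ‖a‖ with hAdef
  set Z := ‖ζ‖ with hZdef
  set P := ‖η₀‖ * ‖η₁‖ * ‖η₂‖ with hPdef
  have hA0 : 0 < A := ha0
  have hZ1 : 1 < Z := hζ
  have hP0 : 0 ≤ P := by positivity
  clear_value B l A Z P
  -- equation at w = 0
  have e0 : (r : ℂ) * a = c * (starRingEnd ℂ) a * ζ * (η₀ * η₁ * η₂) := by
    have h := heq 0
    linear_combination -h
  have habs0 : r * A = c * A * Z * P := by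
    have h := congrArg norm e0
    simp only [norm_mul, Complex.norm_conj, Complex.norm_real, Real.norm_eq_abs, abs_of_pos hr, abs_of_pos hc] at h
    rw [hAdef, hZdef, hPdef]
    linear_combination h
  -- equation at w = ζ
  have eζ : (r : ℂ) * ζ + c * ζ ^ 3 = r * a + c * (starRingEnd ℂ) a * ζ ^ 4 := by
    linear_combination heq ζ
  -- abs of constraint
  have habsc : A * r * l ^ 2 = P ^ 3 := by
    have h := congrArg norm hcon
    have he : (6 * (θ:ℂ) * Complex.I) = ((6 * θ : ℝ) : ℂ) * Complex.I := by push_cast; ring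
    rw [he] at h
    simp only [norm_mul, norm_pow, Complex.norm_exp_ofReal_mul_I, Complex.norm_real, Real.norm_eq_abs,
      abs_of_pos hr, one_mul] at h
    rw [abs_of_pos hl0] at h
    rw [hAdef, hPdef]
    linear_combination h
  -- r = c Z P
  have hcZP : c * Z * P = r := mul_right_cancel₀ hA0.ne' (by linear_combination -habs0)
  -- c³ Z³ A l² = r²
  have h4 : c ^ 3 * Z ^ 3 * A * l ^ 2 = r ^ 2 := by
    have hcube : c ^ 3 * Z ^ 3 * P ^ 3 = r ^ 3 := by
      linear_combination (c ^ 2 * Z ^ 2 * P ^ 2 + c * Z * P * r + r ^ 2) * hcZP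
    apply mul_right_cancel₀ hr.ne'
    calc c ^ 3 * Z ^ 3 * A * l ^ 2 * r = c ^ 3 * Z ^ 3 * (A * r * l ^ 2) := by ring
    _ = c ^ 3 * Z ^ 3 * P ^ 3 := by rw [habsc]
    _ = r ^ 3 := hcube
    _ = r ^ 2 * r := by ring
  have hZ3 : 1 < Z ^ 3 := one_lt_pow₀ hZ1 (by norm_num)
  have h5 : c ^ 3 * l ^ 2 * A < r ^ 2 := by
    nlinarith [mul_pos (mul_pos (pow_pos hc 3) (pow_pos hl0 2)) hA0]
  have h6 : c * A * Z ^ 4 * (c ^ 2 * l ^ 2) = Z * r ^ 2 := by linear_combination Z * h4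
  -- triangle inequality bounds
  have hRHS : ‖(r:ℂ) * a + c * (starRingEnd ℂ) a * ζ ^ 4‖ ≤ r * A + c * A * Z ^ 4 := by
    rw [hAdef, hZdef]
    refine le_trans (norm_add_le _ _) ?_
    simp only [norm_mul, norm_pow, Complex.norm_conj, Complex.norm_real, Real.norm_eq_abs,
      abs_of_pos hr, abs_of_pos hc]
    exact le_of_eq (by ring)
  have hLHS : Z * (c * Z ^ 2 - r) ≤ ‖(r:ℂ) * ζ + c * ζ ^ 3‖ := by
    have he2 : (r:ℂ) * ζ + c * ζ ^ 3 = ζ * ((r:ℂ) + c * ζ ^ 2) := by ring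
    rw [he2, norm_mul, ← hZdef]
    have key := norm_add_le ((r:ℂ) + (c:ℂ) * ζ ^ 2) (-(r:ℂ))
    rw [show (r:ℂ) + (c:ℂ) * ζ ^ 2 + -(r:ℂ) = (c:ℂ) * ζ ^ 2 from by ring,
      norm_neg, norm_mul, norm_pow, Complex.norm_real, Complex.norm_real,
      Real.norm_eq_abs, Real.norm_eq_abs, abs_of_pos hr, abs_of_pos hc] at key
    rw [← hZdef] at key
    have hZ0 : (0:ℝ) < Z := lt_trans one_pos hZ1
    have h' : c * Z ^ 2 - r ≤ ‖(r:ℂ) + (c:ℂ) * ζ ^ 2‖ := by linarith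
    exact mul_le_mul_of_nonneg_left h' hZ0.le
  have h3 : Z * (c * Z ^ 2 - r) ≤ r * A + c * A * Z ^ 4 := by
    have e' := congrArg norm eζ
    calc Z * (c * Z ^ 2 - r) ≤ ‖(r:ℂ) * ζ + c * ζ ^ 3‖ := hLHS
    _ = ‖(r:ℂ) * a + c * (starRingEnd ℂ) a * ζ ^ 4‖ := e'
    _ ≤ r * A + c * A * Z ^ 4 := hRHS
  -- final contradiction: (c - r) * c² * l² < 2 r² but l² > B
  clear heq hcon e0 eζ habs0 habsc hcZP hRHS hLHS h4 hl ht1 ht0 hldef hAdef hZdef hPdef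
  have hZ0 : (0:ℝ) < Z := lt_trans one_pos hZ1
  have hc2l2 : (0:ℝ) < c ^ 2 * l ^ 2 := mul_pos (pow_pos hc 2) (pow_pos hl0 2)
  have hfin : (c - r) * (c ^ 2 * l ^ 2) < 2 * r ^ 2 := by
    have step : Z * (c * Z ^ 2 - r) * (c ^ 2 * l ^ 2)
        ≤ r * A * (c ^ 2 * l ^ 2) + Z * r ^ 2 := by
      calc Z * (c * Z ^ 2 - r) * (c ^ 2 * l ^ 2)
          ≤ (r * A + c * A * Z ^ 4) * (c ^ 2 * l ^ 2) := by
            exact mul_le_mul_of_nonneg_right h3 hc2l2.le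
        _ = r * A * (c ^ 2 * l ^ 2) + Z * r ^ 2 := by linear_combination h6
    have hZ2 : 1 ≤ Z ^ 2 := by nlinarith
    have s1 : Z * (c - r) * (c ^ 2 * l ^ 2) ≤ Z * (c * Z ^ 2 - r) * (c ^ 2 * l ^ 2) := by
      nlinarith [mul_nonneg (mul_pos (mul_pos hZ0 hc) hc2l2).le (sub_nonneg.mpr hZ2)]
    have s2 : r * A * (c ^ 2 * l ^ 2) < r ^ 2 := by
      have h7 : c * (r * A * (c ^ 2 * l ^ 2)) < c * r ^ 2 := by
        calc c * (r * A * (c ^ 2 * l ^ 2)) = r * (c ^ 3 * l ^ 2 * A) := by ring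
          _ < r * r ^ 2 := mul_lt_mul_of_pos_left h5 hr
          _ < c * r ^ 2 := by nlinarith [pow_pos hr 2]
      exact lt_of_mul_lt_mul_left h7 hc.le
    have s3 : r ^ 2 < Z * r ^ 2 := by nlinarith [pow_pos hr 2]
    have h8 : Z * ((c - r) * (c ^ 2 * l ^ 2)) < Z * (2 * r ^ 2) := by nlinarith [s1, step, s2, s3]
    exact lt_of_mul_lt_mul_left h8 hZ0.le
  rw [hBdef, div_lt_iff₀ (by positivity)] at hlB
  nlinarith [hlB, hfin]
end

section
/- Let q ∈ ℂ with q ≠ 0, and define W(u, w) = u + 2·q⁶·(1 + w)²/u² + q¹²·(1 + w)⁵/(u⁵·w) for u, w ∈ ℂ with u ≠ 0 and w ≠ 0. Then a point (u, w) with u ≠ 0 and w ≠ 0 satisfies both ∂W/∂u = 0 and ∂W/∂w = 0 (complex partial derivatives) if and only if w = 1/8 and u³ = (9/4)³·q⁶, i.e. u = (9/4)·q²·ζ for some ζ ∈ ℂ with ζ³ = 1. -/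
/-- Critical points of the superpotential of the monotone `T(1,4,25)` torus:
`W(u,w) = u + 2q⁶(1+w)²/u² + q¹²(1+w)⁵/(u⁵w)` has critical points exactly at
`w = 1/8`, `u³ = (9/4)³·q⁶`. -/
theorem stmt_9 (q : ℂ) (hq : q ≠ 0) (u w : ℂ) (hu : u ≠ 0) (hw : w ≠ 0) :
    (deriv (fun u' : ℂ =>
        u' + 2 * q ^ 6 * (1 + w) ^ 2 / u' ^ 2 + q ^ 12 * (1 + w) ^ 5 / (u' ^ 5 * w)) u = 0 ∧
     deriv (fun w' : ℂ =>
        u + 2 * q ^ 6 * (1 + w') ^ 2 / u ^ 2 + q ^ 12 * (1 + w') ^ 5 / (u ^ 5 * w')) w = 0)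
    ↔ (w = 1 / 8 ∧ u ^ 3 = (9 / 4) ^ 3 * q ^ 6) := by
  have hd1 : HasDerivAt (fun u' : ℂ =>
      u' + 2 * q ^ 6 * (1 + w) ^ 2 / u' ^ 2 + q ^ 12 * (1 + w) ^ 5 / (u' ^ 5 * w))
      (1 + (0 * u ^ 2 - 2 * q ^ 6 * (1 + w) ^ 2 * ((2:ℕ) * u ^ 1)) / (u ^ 2) ^ 2
        + (0 * (u ^ 5 * w) - q ^ 12 * (1 + w) ^ 5 * ((5:ℕ) * u ^ 4 * w)) / (u ^ 5 * w) ^ 2) u := by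
    exact ((hasDerivAt_id u).add
      ((hasDerivAt_const u (2 * q ^ 6 * (1 + w) ^ 2)).div (hasDerivAt_pow 2 u)
        (pow_ne_zero 2 hu))).add
      ((hasDerivAt_const u (q ^ 12 * (1 + w) ^ 5)).div ((hasDerivAt_pow 5 u).mul_const w)
        (mul_ne_zero (pow_ne_zero 5 hu) hw))
  have hs : HasDerivAt (fun w' : ℂ => 1 + w') 1 w := (hasDerivAt_id w).const_add 1
  have hd2 : HasDerivAt (fun w' : ℂ =>
      u + 2 * q ^ 6 * (1 + w') ^ 2 / u ^ 2 + q ^ 12 * (1 + w') ^ 5 / (u ^ 5 * w'))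
      (0 + 2 * q ^ 6 * ((2:ℕ) * (1 + w) ^ 1 * 1) / u ^ 2
        + (q ^ 12 * ((5:ℕ) * (1 + w) ^ 4 * 1) * (u ^ 5 * w) - q ^ 12 * (1 + w) ^ 5 * (u ^ 5 * 1))
          / (u ^ 5 * w) ^ 2) w := by
    exact ((hasDerivAt_const w u).add (((hs.pow 2).const_mul (2 * q ^ 6)).div_const (u ^ 2))).add
      (((hs.pow 5).const_mul (q ^ 12)).div ((hasDerivAt_id w).const_mul (u ^ 5))
        (mul_ne_zero (pow_ne_zero 5 hu) hw))
  rw [hd1.deriv, hd2.deriv]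
  constructor
  · rintro ⟨h1, h2⟩
    field_simp at h1 h2
    -- clean polynomial forms of the two critical point equations
    have hP1 : u ^ 6 * w - 4 * q ^ 6 * (1 + w) ^ 2 * u ^ 3 * w - 5 * q ^ 12 * (1 + w) ^ 5 = 0 := by
      refine mul_left_cancel₀ (mul_ne_zero (pow_ne_zero 8 hu) hw) ?_
      linear_combination (u ^ 8 * w) * h1
    have hP2 : 4 * q ^ 6 * (1 + w) * u ^ 3 * w ^ 2 + q ^ 12 * (1 + w) ^ 4 * (4 * w - 1) = 0 := by
      refine mul_left_cancel₀ (pow_ne_zero 7 hu) ?_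
      linear_combination u ^ 7 * h2
    have hs0 : (1 : ℂ) + w ≠ 0 := by
      intro h
      have h6 : u ^ 6 * w = 0 := by
        linear_combination hP1 + (4 * q ^ 6 * (1 + w) * u ^ 3 * w + 5 * q ^ 12 * (1 + w) ^ 4) * h
      rcases mul_eq_zero.mp h6 with h' | h'
      · exact pow_ne_zero 6 hu h'
      · exact hw h'
    have hkey : q ^ 6 * (1 + w) ^ 4 * u ^ 6 * w * (1 - 8 * w) = 0 := by
      linear_combination (q ^ 6 * (1 + w) ^ 4 * (1 - 4 * w) ^ 2) * hP1
        - (5 * q ^ 6 * (1 + w) ^ 5 * (1 - 4 * w) + 4 * (1 + w) ^ 3 * u ^ 3 * w) * hP2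
    have h18 : (1 : ℂ) - 8 * w = 0 := by
      rcases mul_eq_zero.mp hkey with h' | h'
      · exfalso
        rcases mul_eq_zero.mp h' with h'' | h''
        · rcases mul_eq_zero.mp h'' with h3 | h3
          · rcases mul_eq_zero.mp h3 with h4 | h4
            · exact pow_ne_zero 6 hq h4
            · exact pow_ne_zero 4 hs0 h4
          · exact pow_ne_zero 6 hu h3
        · exact hw h''
      · exact h'
    have hw18 : w = 1 / 8 := by linear_combination (-1 / 8 : ℂ) * h18
    subst hw18
    refine ⟨rfl, ?_⟩
    refine mul_left_cancel₀ (pow_ne_zero 6 hq) ?_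
    linear_combination (128 / 9 : ℂ) * hP2
  · rintro ⟨h18, hu3⟩
    subst h18
    constructor
    · field_simp
      linear_combination (4096 * u ^ 3 + 25920 * q ^ 6 : ℂ) * hu3
    · field_simp
      linear_combination (2304 * q ^ 6 : ℂ) * hu3
end

section
/- Let E₁, E₂ ∈ ℂ with E₁ ≠ 0, and let u₁, u₂ ∈ ℂ with u₁ ≠ 0, u₂ ≠ 0. Set w = u₁/u₂ and assume 1 + w ≠ 0; set w̃ = E₁·(1 + w)²/(u₁·u₂) and assume 1 + w̃ ≠ 0. Define z₁ = u₁·(1 + w̃)/(1 + w) and z₂ = u₂/((1 + w)·(1 + w̃)). Then z₁ + z₂ + E₁/z₁ + E₂/z₂ = u₂ + (E₁ + E₂)·(1 + w)/u₂ + E₁·E₂·(1 + w)³/(u₁·u₂²). -/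
set_option maxHeartbeats 1000000 in
/-- Composite wall-crossing computation in `ℂP¹ × ℂP¹` predicting the superpotential
of the `T(1,2,9)` torus: with `w = u₁/u₂`, `w̃ = E₁(1+w)²/(u₁u₂)`,
`z₁ = u₁(1+w̃)/(1+w)` and `z₂ = u₂/((1+w)(1+w̃))`, the Clifford superpotential
`z₁ + z₂ + E₁/z₁ + E₂/z₂` equals
`u₂ + (E₁+E₂)(1+w)/u₂ + E₁E₂(1+w)³/(u₁u₂²)`. -/
theorem stmt_12 (E₁ E₂ u₁ u₂ : ℂ) (hE₁ : E₁ ≠ 0) (hu₁ : u₁ ≠ 0) (hu₂ : u₂ ≠ 0)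
    (h1w : 1 + u₁ / u₂ ≠ 0)
    (h1wt : 1 + E₁ * (1 + u₁ / u₂) ^ 2 / (u₁ * u₂) ≠ 0) :
    (u₁ * (1 + E₁ * (1 + u₁ / u₂) ^ 2 / (u₁ * u₂)) / (1 + u₁ / u₂)) +
      (u₂ / ((1 + u₁ / u₂) * (1 + E₁ * (1 + u₁ / u₂) ^ 2 / (u₁ * u₂)))) +
      E₁ / (u₁ * (1 + E₁ * (1 + u₁ / u₂) ^ 2 / (u₁ * u₂)) / (1 + u₁ / u₂)) +
      E₂ / (u₂ / ((1 + u₁ / u₂) * (1 + E₁ * (1 + u₁ / u₂) ^ 2 / (u₁ * u₂)))) =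
    u₂ + (E₁ + E₂) * (1 + u₁ / u₂) / u₂ +
      E₁ * E₂ * (1 + u₁ / u₂) ^ 3 / (u₁ * u₂ ^ 2) := by
  have hA : u₂ + u₁ ≠ 0 := by
    intro h
    apply h1w
    field_simp
    linear_combination h
  have hN : u₁ * u₂ ^ 3 + E₁ * (u₂ + u₁) ^ 2 ≠ 0 := by
    intro h
    apply h1wt
    field_simp
    linear_combination h
  have hz1 : u₁ * (1 + E₁ * (1 + u₁ / u₂) ^ 2 / (u₁ * u₂)) / (1 + u₁ / u₂) =
      (u₁ * u₂ ^ 3 + E₁ * (u₂ + u₁) ^ 2) / (u₂ ^ 2 * (u₂ + u₁)) := by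
    field_simp
  have hz2 : u₂ / ((1 + u₁ / u₂) * (1 + E₁ * (1 + u₁ / u₂) ^ 2 / (u₁ * u₂))) =
      u₁ * u₂ ^ 5 / ((u₂ + u₁) * (u₁ * u₂ ^ 3 + E₁ * (u₂ + u₁) ^ 2)) := by
    rw [div_eq_div_iff]
    · field_simp
    · apply mul_ne_zero h1w h1wt
    · exact mul_ne_zero hA hN
  rw [hz1, hz2]
  set a := u₂ + u₁ with ha
  set n := u₁ * u₂ ^ 3 + E₁ * a ^ 2 with hn
  clear_value a n
  have ha2 : a ≠ 0 := hA
  have hn2 : n ≠ 0 := hN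
  field_simp
  have hd1 : u₂ ^ 2 * a * (a * n) * n ≠ 0 := by
    exact mul_ne_zero (mul_ne_zero (mul_ne_zero (pow_ne_zero 2 hu₂) hA) (mul_ne_zero hA hN)) hN
  have hd2 : u₂ * u₂ * (u₂ ^ 3 * (u₁ * u₂ ^ 2)) ≠ 0 := by
    exact mul_ne_zero (mul_ne_zero hu₂ hu₂) (mul_ne_zero (pow_ne_zero 3 hu₂)
      (mul_ne_zero hu₁ (pow_ne_zero 2 hu₂)))
  rw [hn, ha]
  ring
end

section
/- Every Markov triple can be obtained from (1,1,1) by a finite sequence of moves, each of which is either a permutation of the three entries or the mutation (a, b, c) ↦ (a, b, 3ab − c). That is, if positive integers a, b, c satisfy a² + b² + c² = 3abc, then (a, b, c) is in the reflexive-transitive closure, starting from (1,1,1), of the relation generated by permutations of triples and by (a, b, c) ↦ (a, b, 3ab − c). -/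
/-- One step in the Markov tree: either a permutation of the entries of the triple,
or the mutation `(a, b, c) ↦ (a, b, 3ab − c)`. -/
def MarkovStep (p q : ℤ × ℤ × ℤ) : Prop :=
  (∃ a b c : ℤ, p = (a, b, c) ∧
    (q = (a, c, b) ∨ q = (b, a, c) ∨ q = (b, c, a) ∨ q = (c, a, b) ∨ q = (c, b, a))) ∨
  (∃ a b c : ℤ, p = (a, b, c) ∧ q = (a, b, 3 * a * b - c))

private lemma reach_mut (a b c : ℤ) {p : ℤ × ℤ × ℤ}
    (h : Relation.ReflTransGen MarkovStep p (a, b, c)) :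
    Relation.ReflTransGen MarkovStep p (a, b, 3 * a * b - c) :=
  h.tail (Or.inr ⟨a, b, c, rfl, rfl⟩)

private lemma sorted_case : ∀ n : ℕ, ∀ a b c : ℤ, a + b + c ≤ (n : ℤ) →
    0 < a → 0 < b → 0 < c → a ≤ b → b ≤ c →
    a ^ 2 + b ^ 2 + c ^ 2 = 3 * a * b * c →
    Relation.ReflTransGen MarkovStep (1, 1, 1) (a, b, c) := by
  intro n
  induction n with
  | zero => intro a b c hs ha hb hc _ _ _; exfalso; push_cast at hs; linarith
  | succ n ih =>
    intro a b c hs ha hb hc hab hbc hM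
    by_cases hc1 : c = 1
    · have ha1 : a = 1 := by omega
      have hb1 : b = 1 := by omega
      subst ha1; subst hb1; subst hc1
      exact Relation.ReflTransGen.refl
    by_cases hb1 : b = 1
    · have ha1 : a = 1 := by omega
      subst ha1; subst hb1
      have hfac : (c - 1) * (c - 2) = 0 := by linear_combination hM
      have hc2 : c = 2 := by
        rcases mul_eq_zero.1 hfac with h | h <;> omega
      subst hc2
      have h0 := reach_mut 1 1 1 (Relation.ReflTransGen.refl)
      norm_num at h0
      exact h0
    · have hb2 : 2 ≤ b := by omega
      set d := 3 * a * b - c with hd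
      have hcd : c * d = a ^ 2 + b ^ 2 := by rw [hd]; linear_combination -hM
      have hdpos : 0 < d := by nlinarith [sq_nonneg a, sq_nonneg b, mul_pos ha ha, mul_pos hb hb]
      have hfb : (b - c) * (b - d) < 0 := by
        have key : 3 * a * b ^ 2 - a ^ 2 - 2 * b ^ 2 > 0 := by
          nlinarith [mul_nonneg (by linarith : (0:ℤ) ≤ a - 1) (sq_nonneg b),
            mul_nonneg (by linarith : (0:ℤ) ≤ a - 1) (by nlinarith : (0:ℤ) ≤ b ^ 2 - 1),
            mul_nonneg (by linarith : (0:ℤ) ≤ b - a) (by linarith : (0:ℤ) ≤ b + a)]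
        rw [hd]
        nlinarith [key]
      have hbc' : b < c := by
        rcases eq_or_lt_of_le hbc with h | h
        · exfalso; rw [h] at hfb; simp at hfb
        · exact h
      have hdb : d < b := by nlinarith [hfb]
      have hM' : a ^ 2 + b ^ 2 + d ^ 2 = 3 * a * b * d := by
        rw [hd]; linear_combination hM
      have hsum : a + b + d ≤ (n : ℤ) := by push_cast at hs; linarith
      have hreach : Relation.ReflTransGen MarkovStep (1, 1, 1) (a, b, d) := by
        rcases le_total a d with h | h
        · have hpath := ih a d b (by linarith) ha hdpos hb h (le_of_lt hdb)
            (by linear_combination hM')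
          exact hpath.tail (Or.inl ⟨a, d, b, rfl, Or.inl rfl⟩)
        · have hpath := ih d a b (by linarith) hdpos ha hb h hab
            (by linear_combination hM')
          exact hpath.tail (Or.inl ⟨d, a, b, rfl, Or.inr (Or.inr (Or.inl rfl))⟩)
      have hfin := reach_mut a b d hreach
      have hdc : 3 * a * b - d = c := by rw [hd]; ring
      rw [hdc] at hfin
      exact hfin

private lemma reach_sorted (x y z : ℤ) (hx : 0 < x) (hy : 0 < y) (hz : 0 < z)
    (hxy : x ≤ y) (hyz : y ≤ z) (hM : x ^ 2 + y ^ 2 + z ^ 2 = 3 * x * y * z) :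
    Relation.ReflTransGen MarkovStep (1, 1, 1) (x, y, z) :=
  sorted_case (x + y + z).toNat x y z (Int.self_le_toNat _) hx hy hz hxy hyz hM

/-- Every Markov triple is obtained from `(1,1,1)` by a finite sequence of
permutations and mutations `(a, b, c) ↦ (a, b, 3ab − c)`. -/
theorem stmt_13 (a b c : ℤ) (ha : 0 < a) (hb : 0 < b) (hc : 0 < c)
    (hM : a ^ 2 + b ^ 2 + c ^ 2 = 3 * a * b * c) :
    Relation.ReflTransGen MarkovStep (1, 1, 1) (a, b, c) := by
  rcases le_total a b with hab | hba
  · rcases le_total b c with hbc | hcb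
    · exact reach_sorted a b c ha hb hc hab hbc hM
    · rcases le_total a c with hac | hca
      · exact (reach_sorted a c b ha hc hb hac hcb (by linear_combination hM)).tail
          (Or.inl ⟨a, c, b, rfl, Or.inl rfl⟩)
      · exact (reach_sorted c a b hc ha hb hca hab (by linear_combination hM)).tail
          (Or.inl ⟨c, a, b, rfl, Or.inr (Or.inr (Or.inl rfl))⟩)
  · rcases le_total a c with hac | hca
    · exact (reach_sorted b a c hb ha hc hba hac (by linear_combination hM)).tail
        (Or.inl ⟨b, a, c, rfl, Or.inr (Or.inl rfl)⟩)
    · rcases le_total b c with hbc | hcb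
      · exact (reach_sorted b c a hb hc ha hbc hca (by linear_combination hM)).tail
          (Or.inl ⟨b, c, a, rfl, Or.inr (Or.inr (Or.inr (Or.inl rfl)))⟩)
      · exact (reach_sorted c b a hc hb ha hcb hba (by linear_combination hM)).tail
          (Or.inl ⟨c, b, a, rfl, Or.inr (Or.inr (Or.inr (Or.inr rfl)))⟩)
end

section
/- Let 0 < r < c be real numbers, θ ∈ ℝ, and I ⊆ {1, …, 5}. Let η₁, …, η₅ ∈ ℂ be the five roots of η⁵ = −r/c and set τⱼ(w) = (w − ηⱼ)/(1 − conj(ηⱼ)·w). For w in the closed unit disc define x̃(w) = e^{−iθ}·√(r·w⁵ + c)·∏_{j∉I}τⱼ(w) and z̃(w) = e^{iθ}·√(r·w⁵ + c)·∏_{j∈I}τⱼ(w), where √ denotes the principal square root (well-defined since Re(r·w⁵ + c) ≥ c − r > 0 for |w| ≤ 1). Then: (i) x̃ and z̃ are complex-differentiable on the open unit disc; (ii) x̃(w)·z̃(w) = c·w⁵ + r for all w in the closed unit disc; and (iii) for every w with |w| = 1, |x̃(w)| = |z̃(w)| and |x̃(w)·z̃(w)/w⁵ − c| = r. -/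
open Finset

/-- The Blaschke factor `τ_η(w) = (w − η)/(1 − conj(η)·w)`. -/
noncomputable def blaschke (η w : ℂ) : ℂ := (w - η) / (1 - (starRingEnd ℂ) η * w)

/-- The limit disc `x̃` from Proposition `limDiscs`. -/
noncomputable def xTilde (r c θ : ℝ) (S : Finset (Fin 5)) (η : Fin 5 → ℂ) (w : ℂ) : ℂ :=
  Complex.exp (-(θ : ℂ) * Complex.I) * ((r : ℂ) * w ^ 5 + c) ^ ((1 : ℂ) / 2) *
    ∏ j ∈ Sᶜ, blaschke (η j) w

/-- The limit disc `z̃` from Proposition `limDiscs`. -/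
noncomputable def zTilde (r c θ : ℝ) (S : Finset (Fin 5)) (η : Fin 5 → ℂ) (w : ℂ) : ℂ :=
  Complex.exp ((θ : ℂ) * Complex.I) * ((r : ℂ) * w ^ 5 + c) ^ ((1 : ℂ) / 2) *
    ∏ j ∈ S, blaschke (η j) w

open Polynomial in
lemma key_prod (a : ℂ) (η : Fin 5 → ℂ) (hroot : ∀ j, η j ^ 5 = a)
    (hinj : Function.Injective η) (w : ℂ) : ∏ j, (w - η j) = w ^ 5 - a := by
  set p : ℂ[X] := X ^ 5 - C a with hp
  have hmon : p.Monic := monic_X_pow_sub_C a (by norm_num)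
  have hpne : p ≠ 0 := hmon.ne_zero
  have hdeg : p.natDegree = 5 := by
    simp [hp, natDegree_X_pow_sub_C]
  set m : Multiset ℂ := Multiset.map η Finset.univ.val with hm
  have hnodup : m.Nodup := Multiset.Nodup.map hinj Finset.univ.nodup
  have hsub : m ⊆ p.roots := by
    intro x hx
    rw [hm, Multiset.mem_map] at hx
    obtain ⟨j, _, rfl⟩ := hx
    rw [mem_roots hpne]
    simp [hp, IsRoot, hroot j]
  have hle : m ≤ p.roots := (Multiset.le_iff_subset hnodup).2 hsub
  have hcardm : Multiset.card m = 5 := by simp [hm]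
  have heq : m = p.roots := Multiset.eq_of_le_of_card_le hle (by
    rw [hcardm]; simpa [hdeg] using p.card_roots')
  have hfac := (IsAlgClosed.splits p).eq_prod_roots_of_monic hmon
  rw [← heq, hm, Multiset.map_map] at hfac
  have := congrArg (eval w) hfac
  simp only [hp, eval_sub, eval_pow, eval_X, eval_C] at this
  rw [this]
  rw [show (Multiset.map ((fun b => X - C b) ∘ η) Finset.univ.val).prod
      = ∏ j, (X - C (η j)) from rfl]
  rw [eval_prod]
  simp

section main
variable (r c : ℝ) (hr : 0 < r) (hrc : r < c) (η : Fin 5 → ℂ)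
  (hroot : ∀ j, η j ^ 5 = -(r / c : ℂ)) (hinj : Function.Injective η)

include hr hrc hroot in
lemma abs_eta_lt (j : Fin 5) : ‖η j‖ < 1 := by
  have hc : (0:ℝ) < c := hr.trans hrc
  have h5 : ‖η j‖ ^ 5 = r / c := by
    rw [← norm_pow, hroot j]
    simp [abs_of_pos, div_pos hr hc, le_of_lt (div_pos hr hc), abs_of_pos hr, abs_of_pos hc]
  have : ‖η j‖ ^ 5 < 1 := by
    rw [h5]; rw [div_lt_one hc]; exact hrc
  exact (pow_lt_one_iff_of_nonneg (norm_nonneg _) (by norm_num)).1 this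

include hr hrc hroot in
lemma den_ne (j : Fin 5) (w : ℂ) (hw : ‖w‖ ≤ 1) :
    1 - (starRingEnd ℂ) (η j) * w ≠ 0 := by
  intro h
  have h1 : (starRingEnd ℂ) (η j) * w = 1 := by linear_combination -h
  have := congrArg (‖·‖) h1
  rw [norm_mul, Complex.norm_conj, norm_one] at this
  have hlt := abs_eta_lt r c hr hrc η hroot j
  nlinarith [norm_nonneg w, norm_nonneg (η j)]

include hr hrc in
lemma rwc_re_pos (w : ℂ) (hw : ‖w‖ ≤ 1) : 0 < ((r : ℂ) * w ^ 5 + c).re := by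
  have h1 : |(w ^ 5).re| ≤ ‖w ^ 5‖ := Complex.abs_re_le_norm _
  have h2 : ‖w ^ 5‖ ≤ 1 := by
    rw [norm_pow]; exact pow_le_one₀ (norm_nonneg _) hw
  have h3 : ((r : ℂ) * w ^ 5 + c).re = r * (w ^ 5).re + c := by
    simp [Complex.add_re, Complex.re_ofReal_mul]
  rw [h3]
  have h4 := abs_le.1 (h1.trans h2)
  nlinarith

include hr hrc in
lemma rwc_ne (w : ℂ) (hw : ‖w‖ ≤ 1) : (r : ℂ) * w ^ 5 + c ≠ 0 := by
  intro h
  have := rwc_re_pos r c hr hrc w hw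
  rw [h] at this
  simp at this

include hr hrc hroot hinj in
lemma conj_prod (w : ℂ) :
    ∏ j, (1 - (starRingEnd ℂ) (η j) * w) = 1 + (r / c : ℂ) * w ^ 5 := by
  have hc : (c : ℂ) ≠ 0 := by
    exact_mod_cast (ne_of_gt (hr.trans hrc) : c ≠ 0)
  have hconjroot : ∀ j, ((starRingEnd ℂ) (η j)) ^ 5 = -(r / c : ℂ) := by
    intro j
    rw [← map_pow, hroot j]
    simp [map_div₀, Complex.conj_ofReal]
  have hconjinj : Function.Injective (fun j => (starRingEnd ℂ) (η j)) :=
    (starRingEnd ℂ).injective.comp hinj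
  rcases eq_or_ne w 0 with rfl | hw
  · simp
  · have hkey := key_prod (-(r / c : ℂ)) (fun j => (starRingEnd ℂ) (η j))
      hconjroot hconjinj w⁻¹
    have hstep : ∀ j : Fin 5, 1 - (starRingEnd ℂ) (η j) * w
        = w * (w⁻¹ - (starRingEnd ℂ) (η j)) := by
      intro j
      field_simp
    simp_rw [hstep]
    rw [Finset.prod_mul_distrib, Finset.prod_const, Finset.card_univ, Fintype.card_fin, hkey]
    have h5 : w ^ 5 * (w⁻¹ ^ 5) = 1 := by field_simp
    field_simp
    ring

include hr hrc hroot hinj in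
lemma blaschke_prod (w : ℂ) (hw : ‖w‖ ≤ 1) :
    ∏ j, blaschke (η j) w = ((c : ℂ) * w ^ 5 + r) / ((r : ℂ) * w ^ 5 + c) := by
  have hc : (c : ℂ) ≠ 0 := by
    exact_mod_cast (ne_of_gt (hr.trans hrc) : c ≠ 0)
  unfold blaschke
  rw [Finset.prod_div_distrib, key_prod (-(r / c : ℂ)) η hroot hinj w,
    conj_prod r c hr hrc η hroot hinj w]
  rw [div_eq_div_iff]
  · field_simp
    ring
  · intro h
    apply Finset.prod_ne_zero_iff.2 (fun j _ => den_ne r c hr hrc η hroot j w hw)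
    rw [conj_prod r c hr hrc η hroot hinj w, h]
  · exact rwc_ne r c hr hrc w hw

include hr hrc hroot in
lemma abs_blaschke (j : Fin 5) (w : ℂ) (hw : ‖w‖ = 1) :
    ‖blaschke (η j) w‖ = 1 := by
  have hden := den_ne r c hr hrc η hroot j w hw.le
  have hkey : w - η j = w * (starRingEnd ℂ) (1 - (starRingEnd ℂ) (η j) * w) := by
    have hmc : w * (starRingEnd ℂ) w = 1 := by
      rw [Complex.mul_conj]
      norm_cast
      rw [Complex.normSq_eq_norm_sq, hw]; norm_num
    simp only [map_sub, map_mul, map_one, Complex.conj_conj]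
    linear_combination (η j) * hmc
  unfold blaschke
  rw [norm_div, hkey, norm_mul, Complex.norm_conj, hw, one_mul, div_self]
  exact (norm_ne_zero_iff.2 hden)
end main

lemma diff_aux (r c : ℝ) (hr : 0 < r) (hrc : r < c) (η : Fin 5 → ℂ)
    (hroot : ∀ j, η j ^ 5 = -(r / c : ℂ)) (a : ℂ) (T : Finset (Fin 5)) :
    DifferentiableOn ℂ
      (fun w => Complex.exp a * ((r : ℂ) * w ^ 5 + c) ^ ((1 : ℂ) / 2) *
        ∏ j ∈ T, blaschke (η j) w) (Metric.ball 0 1) := by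
  intro w hw
  have hw1 : ‖w‖ ≤ 1 := by
    rw [Metric.mem_ball, dist_zero_right] at hw
    exact le_of_lt hw
  apply DifferentiableAt.differentiableWithinAt
  apply DifferentiableAt.mul
  · apply DifferentiableAt.mul (differentiableAt_const _)
    exact DifferentiableAt.cpow (by fun_prop) (differentiableAt_const _)
      (Complex.mem_slitPlane_iff.2 (Or.inl (rwc_re_pos r c hr hrc w hw1)))
  · apply DifferentiableAt.fun_finsetProd
    intro j _
    unfold blaschke
    exact DifferentiableAt.div (by fun_prop) (by fun_prop)
      (den_ne r c hr hrc η hroot j w hw1)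


/-- Proposition `limDiscs`: the limit discs `u_I^θ` in `ℂP(1,1,4)` are holomorphic on
the open unit disc, satisfy `x̃·z̃ = c·w⁵ + r` on the closed unit disc, and their
boundary lies on the Chekanov-type torus: `|x̃| = |z̃|` and `|x̃z̃/w⁵ − c| = r`
on the unit circle. -/
theorem stmt_15 (r c : ℝ) (hr : 0 < r) (hrc : r < c) (θ : ℝ) (S : Finset (Fin 5))
    (η : Fin 5 → ℂ) (hroot : ∀ j, η j ^ 5 = -(r / c : ℂ))
    (hinj : Function.Injective η) :
    DifferentiableOn ℂ (xTilde r c θ S η) (Metric.ball 0 1) ∧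
    DifferentiableOn ℂ (zTilde r c θ S η) (Metric.ball 0 1) ∧
    (∀ w ∈ Metric.closedBall (0 : ℂ) 1,
      xTilde r c θ S η w * zTilde r c θ S η w = c * w ^ 5 + r) ∧
    (∀ w : ℂ, ‖w‖ = 1 →
      ‖xTilde r c θ S η w‖ = ‖zTilde r c θ S η w‖ ∧
      ‖xTilde r c θ S η w * zTilde r c θ S η w / w ^ 5 - c‖ = r) := by
  have hii : ∀ w ∈ Metric.closedBall (0 : ℂ) 1,
      xTilde r c θ S η w * zTilde r c θ S η w = c * w ^ 5 + r := by
    intro w hw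
    have hw1 : ‖w‖ ≤ 1 := by
      rwa [Metric.mem_closedBall, dist_zero_right] at hw
    have hne := rwc_ne r c hr hrc w hw1
    unfold xTilde zTilde
    have hexp : Complex.exp (-(θ : ℂ) * Complex.I) * Complex.exp ((θ : ℂ) * Complex.I)
        = 1 := by
      rw [← Complex.exp_add]
      norm_num [Complex.exp_zero]
    have hsq : ((r : ℂ) * w ^ 5 + c) ^ ((1 : ℂ) / 2) * ((r : ℂ) * w ^ 5 + c) ^ ((1 : ℂ) / 2)
        = (r : ℂ) * w ^ 5 + c := by
      rw [← Complex.cpow_add _ _ hne]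
      norm_num
    have hprod : (∏ j ∈ Sᶜ, blaschke (η j) w) * ∏ j ∈ S, blaschke (η j) w
        = ((c : ℂ) * w ^ 5 + r) / ((r : ℂ) * w ^ 5 + c) := by
      rw [Finset.prod_compl_mul_prod]
      exact blaschke_prod r c hr hrc η hroot hinj w hw1
    calc Complex.exp (-(θ : ℂ) * Complex.I) * ((r : ℂ) * w ^ 5 + c) ^ ((1 : ℂ) / 2) *
          (∏ j ∈ Sᶜ, blaschke (η j) w) *
        (Complex.exp ((θ : ℂ) * Complex.I) * ((r : ℂ) * w ^ 5 + c) ^ ((1 : ℂ) / 2) *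
          ∏ j ∈ S, blaschke (η j) w)
        = (Complex.exp (-(θ : ℂ) * Complex.I) * Complex.exp ((θ : ℂ) * Complex.I)) *
          (((r : ℂ) * w ^ 5 + c) ^ ((1 : ℂ) / 2) * ((r : ℂ) * w ^ 5 + c) ^ ((1 : ℂ) / 2)) *
          ((∏ j ∈ Sᶜ, blaschke (η j) w) * ∏ j ∈ S, blaschke (η j) w) := by ring
      _ = ((r : ℂ) * w ^ 5 + c) * (((c : ℂ) * w ^ 5 + r) / ((r : ℂ) * w ^ 5 + c)) := by
          rw [hexp, hsq, hprod, one_mul]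
      _ = (c : ℂ) * w ^ 5 + r := mul_div_cancel₀ _ hne
  refine ⟨diff_aux r c hr hrc η hroot _ _, diff_aux r c hr hrc η hroot _ _, hii, ?_⟩
  intro w hw
  have hwcb : w ∈ Metric.closedBall (0 : ℂ) 1 := by
    rw [Metric.mem_closedBall, dist_zero_right]
    exact le_of_eq (by exact_mod_cast hw)
  have hw5 : w ^ 5 ≠ 0 := by
    intro h
    have : ‖w‖ = 0 := by
      have := congrArg (‖·‖) h
      rw [norm_pow] at this
      simpa using this
    rw [hw] at this; norm_num at this
  constructor
  · unfold xTilde zTilde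
    simp only [norm_mul]
    rw [Complex.norm_exp, Complex.norm_exp]
    have habsprod : ∀ T : Finset (Fin 5), ‖∏ j ∈ T, blaschke (η j) w‖ = 1 := by
      intro T
      rw [norm_prod]
      exact Finset.prod_eq_one fun j _ => abs_blaschke r c hr hrc η hroot j w hw
    rw [habsprod, habsprod]
    norm_num
  · rw [hii w hwcb]
    have : ((c : ℝ) : ℂ) * w ^ 5 + r = c * w ^ 5 + r := by norm_num
    rw [show ((c : ℝ) : ℂ) * w ^ 5 + (r : ℂ) = ((c : ℂ) * w ^ 5 + r) from rfl]
    have hstep : ((c : ℂ) * w ^ 5 + r) / w ^ 5 - c = (r : ℂ) / w ^ 5 := by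
      rw [add_div, mul_div_cancel_right₀ _ hw5]
      ring
    rw [hstep, norm_div, norm_pow, hw]
    norm_num
    exact le_of_lt hr
end
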